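/- arXiv:1103.0192 — 7 statements merged into one kernel-verified Lean document; each statement's English description precedes it below -/
import Mathlib

section
/- Let C > 0 and let t, x₁, x₄ be real numbers with t < x₁ < 1 < x₄. Then ∫_t^{x₁} dx / ((1−x)·√(C(x−x₁)(x−x₄))) = (1/√(C(x₄−1)(1−x₁))) · (π/2 − arctan((x₁ + x₄ − 2x₁x₄ + (x₁ + x₄ − 2)t) / (2√((x₁−t)(x₄−t)(x₄−1)(1−x₁))))). -/
open Real Topology Filter

private lemma alpha3_deriv (C x₁ x₄ : ℝ)
    (hC : 0 < C) (hx1 : x₁ < 1) (hx4 : 1 < x₄) {x : ℝ} (hx : x < x₁) :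
    HasDerivAt (fun y => (1 / Real.sqrt (C * (x₄ - 1) * (1 - x₁))) *
        Real.arctan ((x₁ + x₄ - 2 * x₁ * x₄ + (x₁ + x₄ - 2) * y) /
          (2 * Real.sqrt ((x₁ - y) * (x₄ - y) * (x₄ - 1) * (1 - x₁)))))
      (1 / ((1 - x) * Real.sqrt (C * (x - x₁) * (x - x₄)))) x := by
  have ha : 0 < x₁ - x := by linarith
  have hb : 0 < x₄ - x := by linarith
  have hc : 0 < x₄ - 1 := by linarith
  have hd : 0 < 1 - x₁ := by linarith
  have h1x : 0 < 1 - x := by linarith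
  have hApos : 0 < (x₁ - x) * (x₄ - x) * (x₄ - 1) * (1 - x₁) := by positivity
  have h1 : HasDerivAt (fun y : ℝ => x₁ - y) (-1) x := by
    simpa using (hasDerivAt_id x).const_sub x₁
  have h2 : HasDerivAt (fun y : ℝ => x₄ - y) (-1) x := by
    simpa using (hasDerivAt_id x).const_sub x₄
  have hA : HasDerivAt (fun y : ℝ => (x₁ - y) * (x₄ - y) * (x₄ - 1) * (1 - x₁))
      (((-1) * (x₄ - x) + (x₁ - x) * (-1)) * (x₄ - 1) * (1 - x₁)) x :=
    ((h1.mul h2).mul_const (x₄ - 1)).mul_const (1 - x₁)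
  have hSA : HasDerivAt (fun y : ℝ => Real.sqrt ((x₁ - y) * (x₄ - y) * (x₄ - 1) * (1 - x₁)))
      (1 / (2 * Real.sqrt ((x₁ - x) * (x₄ - x) * (x₄ - 1) * (1 - x₁))) *
        (((-1) * (x₄ - x) + (x₁ - x) * (-1)) * (x₄ - 1) * (1 - x₁))) x :=
    (Real.hasDerivAt_sqrt hApos.ne').comp x hA
  have hSpos : 0 < Real.sqrt ((x₁ - x) * (x₄ - x) * (x₄ - 1) * (1 - x₁)) :=
    Real.sqrt_pos.2 hApos
  have hN : HasDerivAt (fun y : ℝ => x₁ + x₄ - 2 * x₁ * x₄ + (x₁ + x₄ - 2) * y)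
      (x₁ + x₄ - 2) x := by
    simpa using ((hasDerivAt_id x).const_mul (x₁ + x₄ - 2)).const_add (x₁ + x₄ - 2 * x₁ * x₄)
  have hden : HasDerivAt
      (fun y : ℝ => 2 * Real.sqrt ((x₁ - y) * (x₄ - y) * (x₄ - 1) * (1 - x₁)))
      (2 * (1 / (2 * Real.sqrt ((x₁ - x) * (x₄ - x) * (x₄ - 1) * (1 - x₁))) *
        (((-1) * (x₄ - x) + (x₁ - x) * (-1)) * (x₄ - 1) * (1 - x₁)))) x := hSA.const_mul 2
  have hg : HasDerivAt (fun y : ℝ => (x₁ + x₄ - 2 * x₁ * x₄ + (x₁ + x₄ - 2) * y) /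
      (2 * Real.sqrt ((x₁ - y) * (x₄ - y) * (x₄ - 1) * (1 - x₁))))
      (((x₁ + x₄ - 2) * (2 * Real.sqrt ((x₁ - x) * (x₄ - x) * (x₄ - 1) * (1 - x₁))) -
        (x₁ + x₄ - 2 * x₁ * x₄ + (x₁ + x₄ - 2) * x) *
          (2 * (1 / (2 * Real.sqrt ((x₁ - x) * (x₄ - x) * (x₄ - 1) * (1 - x₁))) *
            (((-1) * (x₄ - x) + (x₁ - x) * (-1)) * (x₄ - 1) * (1 - x₁))))) /
        (2 * Real.sqrt ((x₁ - x) * (x₄ - x) * (x₄ - 1) * (1 - x₁))) ^ 2) x :=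
    hN.div hden (by positivity)
  have harc := ((Real.hasDerivAt_arctan ((x₁ + x₄ - 2 * x₁ * x₄ + (x₁ + x₄ - 2) * x) /
      (2 * Real.sqrt ((x₁ - x) * (x₄ - x) * (x₄ - 1) * (1 - x₁))))).comp x hg).const_mul
      (1 / Real.sqrt (C * (x₄ - 1) * (1 - x₁)))
  refine harc.congr_deriv (Eq.symm ?_)
  -- now prove the equality of the two derivative values
  have hK : Real.sqrt (C * (x₄ - 1) * (1 - x₁)) =
      Real.sqrt C * Real.sqrt ((x₄ - 1) * (1 - x₁)) := by
    rw [show C * (x₄ - 1) * (1 - x₁) = C * ((x₄ - 1) * (1 - x₁)) by ring,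
      Real.sqrt_mul hC.le]
  have hCx : Real.sqrt (C * (x - x₁) * (x - x₄)) =
      Real.sqrt C * Real.sqrt ((x₁ - x) * (x₄ - x)) := by
    rw [show C * (x - x₁) * (x - x₄) = C * ((x₁ - x) * (x₄ - x)) by ring,
      Real.sqrt_mul hC.le]
  have hAx : Real.sqrt ((x₁ - x) * (x₄ - x) * (x₄ - 1) * (1 - x₁)) =
      Real.sqrt ((x₁ - x) * (x₄ - x)) * Real.sqrt ((x₄ - 1) * (1 - x₁)) := by
    rw [show (x₁ - x) * (x₄ - x) * (x₄ - 1) * (1 - x₁) =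
      ((x₁ - x) * (x₄ - x)) * ((x₄ - 1) * (1 - x₁)) by ring,
      Real.sqrt_mul (by positivity)]
  rw [hK, hCx, hAx]
  set p := Real.sqrt ((x₁ - x) * (x₄ - x)) with hp
  set q := Real.sqrt ((x₄ - 1) * (1 - x₁)) with hq
  set r := Real.sqrt C with hr
  have hppos : 0 < p := Real.sqrt_pos.2 (by positivity)
  have hqpos : 0 < q := Real.sqrt_pos.2 (by positivity)
  have hrpos : 0 < r := Real.sqrt_pos.2 hC
  have hp2 : p ^ 2 = (x₁ - x) * (x₄ - x) := Real.sq_sqrt (by positivity)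
  have hq2 : q ^ 2 = (x₄ - 1) * (1 - x₁) := Real.sq_sqrt (by positivity)
  clear_value p q r
  set N := x₁ + x₄ - 2 * x₁ * x₄ + (x₁ + x₄ - 2) * x with hN'
  set_option maxHeartbeats 1000000 in
  field_simp
  rw [hp2, hq2, hN']; ring


/-- closed form of the improper integral
`∫_t^{x₁} dx / ((1-x) √(C (x-x₁)(x-x₄)))` for `t < x₁ < 1 < x₄` and `C > 0`. -/
theorem integral_alpha3_closed_form (C t x₁ x₄ : ℝ)
    (hC : 0 < C) (htx : t < x₁) (hx1 : x₁ < 1) (hx4 : 1 < x₄) :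
    ∫ x in t..x₁, 1 / ((1 - x) * Real.sqrt (C * (x - x₁) * (x - x₄))) =
      (1 / Real.sqrt (C * (x₄ - 1) * (1 - x₁))) *
        (π / 2 - Real.arctan ((x₁ + x₄ - 2 * x₁ * x₄ + (x₁ + x₄ - 2) * t) /
          (2 * Real.sqrt ((x₁ - t) * (x₄ - t) * (x₄ - 1) * (1 - x₁))))) := by
  have hd1 : 0 < 1 - x₁ := by linarith
  set f : ℝ → ℝ := fun x => 1 / ((1 - x) * Real.sqrt (C * (x - x₁) * (x - x₄))) with hf
  set G : ℝ → ℝ := fun y => (1 / Real.sqrt (C * (x₄ - 1) * (1 - x₁))) *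
        Real.arctan ((x₁ + x₄ - 2 * x₁ * x₄ + (x₁ + x₄ - 2) * y) /
          (2 * Real.sqrt ((x₁ - y) * (x₄ - y) * (x₄ - 1) * (1 - x₁)))) with hG
  -- integrability of `f` on `[t, x₁]`
  have hMpos : 0 < (1 - x₁) * Real.sqrt (C * (x₄ - x₁)) := by
    have : 0 < C * (x₄ - x₁) := by nlinarith
    positivity
  have hint : IntervalIntegrable f MeasureTheory.volume t x₁ := by
    have h0 : IntervalIntegrable (fun y : ℝ => y ^ (-(1/2) : ℝ)) MeasureTheory.volume 0 (x₁ - t) :=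
      intervalIntegral.intervalIntegrable_rpow' (by norm_num)
    have h1 := (h0.comp_sub_left x₁).symm
    rw [show x₁ - (x₁ - t) = t by ring, sub_zero] at h1
    have hbound : IntervalIntegrable
        (fun x : ℝ => ((1 - x₁) * Real.sqrt (C * (x₄ - x₁)))⁻¹ * (x₁ - x) ^ (-(1/2) : ℝ))
        MeasureTheory.volume t x₁ := h1.const_mul _
    refine hbound.mono_fun ?_ ?_
    · refine Measurable.aestronglyMeasurable ?_
      exact measurable_const.div
        ((measurable_const.sub measurable_id).mul
          (Real.continuous_sqrt.measurable.comp
            (((measurable_const.mul (measurable_id.sub measurable_const)).mul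
              (measurable_id.sub measurable_const)) :
              Measurable fun x : ℝ => C * (x - x₁) * (x - x₄))))
    · rw [Filter.EventuallyLE, MeasureTheory.ae_restrict_iff' measurableSet_uIoc]
      refine Filter.Eventually.of_forall ?_
      intro x hxm
      rw [Set.uIoc_of_le htx.le] at hxm
      have hx2 : x ≤ x₁ := hxm.2
      have hfge : 0 ≤ f x := by
        have : (0:ℝ) ≤ (1 - x) * Real.sqrt (C * (x - x₁) * (x - x₄)) := by
          have : 0 ≤ 1 - x := by linarith
          positivity
        simpa [hf] using one_div_nonneg.2 this
      have hrge : 0 ≤ ((1 - x₁) * Real.sqrt (C * (x₄ - x₁)))⁻¹ * (x₁ - x) ^ (-(1/2) : ℝ) := by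
        have h1' : 0 ≤ (x₁ - x) ^ (-(1/2) : ℝ) := Real.rpow_nonneg (by linarith) _
        positivity
      rw [Real.norm_eq_abs, Real.norm_eq_abs, abs_of_nonneg hfge, abs_of_nonneg hrge]
      rcases eq_or_lt_of_le hx2 with heq | hlt
      · have : f x = 0 := by simp [hf, heq]
        rw [this]; exact hrge
      · have hax : 0 < x₁ - x := by linarith
        have hbx : 0 < x₄ - x := by linarith
        have h1x : 0 < 1 - x := by linarith
        have erw1 : (x₁ - x) ^ (-(1/2) : ℝ) = 1 / Real.sqrt (x₁ - x) := by
          rw [Real.rpow_neg hax.le, ← Real.sqrt_eq_rpow, one_div]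
        rw [erw1, hf]
        have hrhs : ((1 - x₁) * Real.sqrt (C * (x₄ - x₁)))⁻¹ * (1 / Real.sqrt (x₁ - x)) =
            1 / ((1 - x₁) * Real.sqrt (C * (x₄ - x₁)) * Real.sqrt (x₁ - x)) := by
          field_simp
        rw [hrhs]
        apply one_div_le_one_div_of_le
        · have : 0 < Real.sqrt (x₁ - x) := Real.sqrt_pos.2 hax
          positivity
        · have e2 : Real.sqrt (C * (x₄ - x₁)) * Real.sqrt (x₁ - x) =
              Real.sqrt (C * (x₄ - x₁) * (x₁ - x)) := by
            rw [← Real.sqrt_mul (by nlinarith)]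
          have e3 : Real.sqrt (C * (x - x₁) * (x - x₄)) =
              Real.sqrt (C * (x₄ - x) * (x₁ - x)) := by
            rw [show C * (x - x₁) * (x - x₄) = C * (x₄ - x) * (x₁ - x) by ring]
          rw [mul_assoc, e2, e3]
          have hs : Real.sqrt (C * (x₄ - x₁) * (x₁ - x)) ≤
              Real.sqrt (C * (x₄ - x) * (x₁ - x)) := by
            apply Real.sqrt_le_sqrt
            nlinarith [mul_nonneg (mul_nonneg hC.le hax.le) hax.le]
          have hs0 : 0 ≤ Real.sqrt (C * (x₄ - x₁) * (x₁ - x)) := Real.sqrt_nonneg _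
          nlinarith [Real.sqrt_nonneg (C * (x₄ - x) * (x₁ - x))]
  -- FTC on `[t, s]` for `s < x₁`
  have hFTC : ∀ s ∈ Set.Ico t x₁, (∫ x in t..s, f x) = G s - G t := by
    intro s hs
    refine intervalIntegral.integral_eq_sub_of_hasDerivAt ?_ ?_
    · intro x hxm
      rw [Set.uIcc_of_le hs.1] at hxm
      exact alpha3_deriv C x₁ x₄ hC hx1 hx4 (lt_of_le_of_lt hxm.2 hs.2)
    · refine hint.mono_set ?_
      rw [Set.uIcc_of_le hs.1, Set.uIcc_of_le htx.le]
      exact Set.Icc_subset_Icc le_rfl hs.2.le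
  -- take the limit `s → x₁⁻`
  haveI : (𝓝[Set.Ico t x₁] x₁).NeBot := right_nhdsWithin_Ico_neBot htx
  have h₁ : Filter.Tendsto (fun s => ∫ x in t..s, f x) (𝓝[Set.Ico t x₁] x₁)
      (𝓝 (∫ x in t..x₁, f x)) := by
    have hco := intervalIntegral.continuousOn_primitive_interval' hint Set.left_mem_uIcc
    have := hco x₁ Set.right_mem_uIcc
    rw [Set.uIcc_of_le htx.le] at this
    exact this.mono_left (nhdsWithin_mono _ Set.Ico_subset_Icc_self)
  have hcpos : 0 < x₁ + x₄ - 2 * x₁ * x₄ + (x₁ + x₄ - 2) * x₁ := by nlinarith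
  have hinner : Filter.Tendsto
      (fun s => (x₁ + x₄ - 2 * x₁ * x₄ + (x₁ + x₄ - 2) * s) /
        (2 * Real.sqrt ((x₁ - s) * (x₄ - s) * (x₄ - 1) * (1 - x₁))))
      (𝓝[Set.Ico t x₁] x₁) Filter.atTop := by
    simp only [div_eq_mul_inv]
    refine Filter.Tendsto.pos_mul_atTop hcpos ?_ ?_
    · have : Continuous fun s : ℝ => x₁ + x₄ - 2 * x₁ * x₄ + (x₁ + x₄ - 2) * s :=
        continuous_const.add (continuous_const.mul continuous_id)
      exact (this.tendsto x₁).mono_left nhdsWithin_le_nhds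
    · refine Filter.Tendsto.inv_tendsto_nhdsGT_zero ?_
      rw [tendsto_nhdsWithin_iff]
      constructor
      · have hcont : Continuous fun s : ℝ =>
            2 * Real.sqrt ((x₁ - s) * (x₄ - s) * (x₄ - 1) * (1 - x₁)) := by
          exact continuous_const.mul (Real.continuous_sqrt.comp
            (((((continuous_const.sub continuous_id).mul
              (continuous_const.sub continuous_id)).mul continuous_const).mul
                continuous_const)))
        have := hcont.tendsto x₁
        simpa using this.mono_left (nhdsWithin_le_nhds (s := Set.Ico t x₁))
      · refine Filter.eventually_of_mem self_mem_nhdsWithin ?_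
        intro s hs
        have hA : 0 < (x₁ - s) * (x₄ - s) * (x₄ - 1) * (1 - x₁) := by
          have h1 : 0 < x₁ - s := by linarith [hs.2]
          have h2 : 0 < x₄ - s := by linarith [hs.2]
          have h3 : 0 < x₄ - 1 := by linarith
          positivity
        have : 0 < Real.sqrt ((x₁ - s) * (x₄ - s) * (x₄ - 1) * (1 - x₁)) :=
          Real.sqrt_pos.2 hA
        simpa using by positivity
  have harc : Filter.Tendsto
      (fun s => Real.arctan ((x₁ + x₄ - 2 * x₁ * x₄ + (x₁ + x₄ - 2) * s) /
        (2 * Real.sqrt ((x₁ - s) * (x₄ - s) * (x₄ - 1) * (1 - x₁)))))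
      (𝓝[Set.Ico t x₁] x₁) (𝓝 (π / 2)) :=
    (Real.tendsto_arctan_atTop.mono_right nhdsWithin_le_nhds).comp hinner
  have h₂ : Filter.Tendsto (fun s => G s - G t) (𝓝[Set.Ico t x₁] x₁)
      (𝓝 ((1 / Real.sqrt (C * (x₄ - 1) * (1 - x₁))) * (π / 2) - G t)) :=
    (harc.const_mul _).sub tendsto_const_nhds
  have h₂' : Filter.Tendsto (fun s => ∫ x in t..s, f x) (𝓝[Set.Ico t x₁] x₁)
      (𝓝 ((1 / Real.sqrt (C * (x₄ - 1) * (1 - x₁))) * (π / 2) - G t)) := by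
    refine h₂.congr' ?_
    refine Filter.eventually_of_mem self_mem_nhdsWithin ?_
    intro s hs
    exact (hFTC s hs).symm
  have hkey := tendsto_nhds_unique h₁ h₂'
  rw [hkey, hG]
  ring
end

section
/- Let C > 0 and let t, x₁, x₄ be real numbers with t < x₁ < 1 < x₄. Define α₂ = π/√(C(x₄−1)(1−x₁)), α₃ = ∫_t^{x₁} dx/((1−x)·√(C(x−x₁)(x−x₄))), and Λ = (x₁ + x₄ − 2x₁x₄ + (x₁ + x₄ − 2)t) / (2√((x₁−t)(x₄−t)(1−x₁)(x₄−1))). Then α₃/α₂ = 1/2 − arctan(Λ)/π. -/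
open Real MeasureTheory Set

private lemma arctan_half_aux {v : ℝ} (hv : 0 < v) :
    Real.arctan ((1 - v ^ 2) / (2 * v)) = π / 2 - 2 * Real.arctan v := by
  have h1 : Real.arctan v < π / 2 := Real.arctan_lt_pi_div_two v
  have h2 : 0 < Real.arctan v := by simpa using Real.arctan_strictMono hv
  have key : Real.tan (π / 2 - 2 * Real.arctan v) = (1 - v ^ 2) / (2 * v) := by
    rw [Real.tan_pi_div_two_sub, Real.tan_two_mul, Real.tan_arctan, inv_div]
  rw [← key, Real.arctan_tan] <;> linarith [Real.pi_pos]

private lemma deriv_key {C t a b : ℝ} (hC : 0 < C) (hta : t < a) (ha1 : a < 1) (hb : 1 < b)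
    {x : ℝ} (hxa : x < a) :
    HasDerivAt (fun y => -(2 / (Real.sqrt C * (Real.sqrt (1 - a) * Real.sqrt (b - 1)))) *
        Real.arctan (Real.sqrt (b - 1) * Real.sqrt (a - y) /
          (Real.sqrt (1 - a) * Real.sqrt (b - y))))
      (1 / ((1 - x) * Real.sqrt (C * (x - a) * (x - b)))) x := by
  have hax : 0 < a - x := by linarith
  have hbx : 0 < b - x := by linarith
  have h1x : 0 < 1 - x := by linarith
  have h1a : 0 < 1 - a := by linarith
  have hb1 : 0 < b - 1 := by linarith
  set m := Real.sqrt (1 - a) with hm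
  set n := Real.sqrt (b - 1) with hn
  set p := Real.sqrt (a - x) with hp
  set q := Real.sqrt (b - x) with hq
  set r := Real.sqrt C with hr
  have hm0 : 0 < m := Real.sqrt_pos.2 h1a
  have hn0 : 0 < n := Real.sqrt_pos.2 hb1
  have hp0 : 0 < p := Real.sqrt_pos.2 hax
  have hq0 : 0 < q := Real.sqrt_pos.2 hbx
  have hr0 : 0 < r := Real.sqrt_pos.2 hC
  have hm2 : m ^ 2 = 1 - a := Real.sq_sqrt h1a.le
  have hn2 : n ^ 2 = b - 1 := Real.sq_sqrt hb1.le
  have hp2 : p ^ 2 = a - x := Real.sq_sqrt hax.le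
  have hq2 : q ^ 2 = b - x := Real.sq_sqrt hbx.le
  have hr2 : r ^ 2 = C := Real.sq_sqrt hC.le
  have hsa : HasDerivAt (fun y : ℝ => Real.sqrt (a - y)) (-1 / (2 * p)) x := by
    have h : HasDerivAt (fun y : ℝ => a - y) (-1) x := by
      simpa using (hasDerivAt_id x).const_sub a
    exact h.sqrt (by simpa using hax.ne')
  have hsb : HasDerivAt (fun y : ℝ => Real.sqrt (b - y)) (-1 / (2 * q)) x := by
    have h : HasDerivAt (fun y : ℝ => b - y) (-1) x := by
      simpa using (hasDerivAt_id x).const_sub b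
    exact h.sqrt (by simpa using hbx.ne')
  have hnum : HasDerivAt (fun y : ℝ => n * Real.sqrt (a - y)) (n * (-1 / (2 * p))) x :=
    hsa.const_mul n
  have hden : HasDerivAt (fun y : ℝ => m * Real.sqrt (b - y)) (m * (-1 / (2 * q))) x :=
    hsb.const_mul m
  have hden0 : m * Real.sqrt (b - x) ≠ 0 := by rw [← hq]; positivity
  have hdiv := hnum.div hden hden0
  have harc := hdiv.arctan
  have hfin := harc.const_mul (-(2 / (r * (m * n))))
  convert hfin using 1
  case e'_4 => rfl
  case e'_5 => rfl
  case e'_8 => rfl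
  have hs : Real.sqrt (C * (x - a) * (x - b)) = r * p * q := by
    rw [show C * (x - a) * (x - b) = (r * p * q) ^ 2 by
      rw [mul_pow, mul_pow, hr2, hp2, hq2]; ring]
    exact Real.sqrt_sq (by positivity)
  rw [hs]
  have hqrel : q ^ 2 = m ^ 2 + n ^ 2 + p ^ 2 := by rw [hm2, hn2, hp2, hq2]; ring
  have h1xe : 1 - x = m ^ 2 + p ^ 2 := by rw [hm2, hp2]; ring
  rw [h1xe]
  simp only [Pi.div_apply, ← hp, ← hq]
  field_simp
  linear_combination (-p ^ 2) * hqrel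

private lemma integrable_key {C t a b : ℝ} (hC : 0 < C) (hta : t < a) (ha1 : a < 1)
    (hb : 1 < b) :
    IntervalIntegrable (fun x => 1 / ((1 - x) * Real.sqrt (C * (x - a) * (x - b))))
      volume t a := by
  have h1a : 0 < 1 - a := by linarith
  have hba : 0 < b - a := by linarith
  set K : ℝ := 1 / ((1 - a) * (Real.sqrt C * Real.sqrt (b - a))) with hK
  have hK0 : 0 < K := by rw [hK]; positivity
  have hg : IntervalIntegrable (fun x => K * (a - x) ^ (-(1/2) : ℝ)) volume t a := by
    have h0 : IntervalIntegrable (fun x : ℝ => x ^ (-(1/2) : ℝ)) volume (a - a) (a - t) :=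
      intervalIntegral.intervalIntegrable_rpow' (by norm_num)
    have := (h0.comp_sub_left a)
    simp only [sub_sub_cancel] at this
    exact (this.symm.const_mul K)
  apply hg.mono_fun'
  · apply Measurable.aestronglyMeasurable
    apply Measurable.div measurable_const
    apply Measurable.mul (by fun_prop)
    exact (Real.continuous_sqrt.measurable).comp (by fun_prop)
  · rw [Filter.EventuallyLE, ae_restrict_iff' measurableSet_uIoc]
    apply Filter.Eventually.of_forall
    intro x hx
    rw [Set.uIoc_of_le hta.le] at hx
    rcases eq_or_lt_of_le hx.2 with heq | hlt
    · subst heq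
      simp [Real.sqrt_eq_zero', Real.zero_rpow (by norm_num : (-(1/2) : ℝ) ≠ 0),
        show C * (x - x) * (x - b) = 0 by ring]
    · have hax : 0 < a - x := by linarith
      have hbx : 0 < b - x := by linarith
      have h1x : 0 < 1 - x := by linarith
      have hs : Real.sqrt (C * (x - a) * (x - b))
          = Real.sqrt C * (Real.sqrt (a - x) * Real.sqrt (b - x)) := by
        rw [show C * (x - a) * (x - b) = C * ((a - x) * (b - x)) by ring,
          Real.sqrt_mul hC.le, Real.sqrt_mul hax.le]
      have hrpow : (a - x) ^ (-(1/2) : ℝ) = (Real.sqrt (a - x))⁻¹ := by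
        rw [Real.rpow_neg hax.le, Real.sqrt_eq_rpow]
      simp only [hs, Real.norm_eq_abs]
      rw [abs_of_nonneg (by positivity), hrpow, hK]
      rw [div_eq_mul_inv, one_mul, div_eq_mul_inv, one_mul]
      rw [← mul_inv]
      apply inv_anti₀
      · positivity
      · calc (1 - a) * (Real.sqrt C * Real.sqrt (b - a)) * Real.sqrt (a - x)
            ≤ (1 - x) * (Real.sqrt C * Real.sqrt (b - x)) * Real.sqrt (a - x) := by
              apply mul_le_mul_of_nonneg_right _ (Real.sqrt_nonneg _)
              apply mul_le_mul (by linarith) (by gcongr <;> linarith) (by positivity)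
                (by linarith)
        _ = (1 - x) * (Real.sqrt C * (Real.sqrt (a - x) * Real.sqrt (b - x))) := by ring

private lemma ftc_key {C t a b : ℝ} (hC : 0 < C) (hta : t < a) (ha1 : a < 1) (hb : 1 < b) :
    (∫ x in t..a, 1 / ((1 - x) * Real.sqrt (C * (x - a) * (x - b)))) =
      (2 / (Real.sqrt C * (Real.sqrt (1 - a) * Real.sqrt (b - 1)))) *
        Real.arctan (Real.sqrt (b - 1) * Real.sqrt (a - t) /
          (Real.sqrt (1 - a) * Real.sqrt (b - t))) := by
  set F : ℝ → ℝ := fun y =>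
      -(2 / (Real.sqrt C * (Real.sqrt (1 - a) * Real.sqrt (b - 1)))) *
      Real.arctan (Real.sqrt (b - 1) * Real.sqrt (a - y) /
        (Real.sqrt (1 - a) * Real.sqrt (b - y))) with hF
  have h1a : 0 < 1 - a := by linarith
  have hcont : ContinuousOn F (Icc t a) := by
    apply ContinuousOn.mul continuousOn_const
    apply Real.continuous_arctan.comp_continuousOn
    apply ContinuousOn.div
    · fun_prop
    · fun_prop
    · intro y hy
      have hby : 0 < b - y := by have := hy.2; simp at this ⊢; nlinarith [hy.2]
      positivity
  have hderiv : ∀ x ∈ Ioo t a, HasDerivWithinAt F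
      (1 / ((1 - x) * Real.sqrt (C * (x - a) * (x - b)))) (Ioi x) x :=
    fun x hx => (deriv_key hC hta ha1 hb hx.2).hasDerivWithinAt
  rw [intervalIntegral.integral_eq_sub_of_hasDeriv_right_of_le hta.le hcont hderiv
    (integrable_key hC hta ha1 hb)]
  have hFa : F a = 0 := by simp [hF]
  rw [hFa, hF]
  ring

/-- with `α₂ = π/√(C(x₄-1)(1-x₁))`,
`α₃ = ∫_t^{x₁} dx/((1-x)√(C(x-x₁)(x-x₄)))` and
`Λ = (x₁+x₄-2x₁x₄+(x₁+x₄-2)t)/(2√((x₁-t)(x₄-t)(1-x₁)(x₄-1)))`,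
one has `α₃/α₂ = 1/2 - arctan Λ / π`. -/
theorem ratio_alpha3_alpha2 (C t x₁ x₄ : ℝ)
    (hC : 0 < C) (htx : t < x₁) (hx1 : x₁ < 1) (hx4 : 1 < x₄) :
    (∫ x in t..x₁, 1 / ((1 - x) * Real.sqrt (C * (x - x₁) * (x - x₄)))) /
        (π / Real.sqrt (C * (x₄ - 1) * (1 - x₁))) =
      1 / 2 - Real.arctan ((x₁ + x₄ - 2 * x₁ * x₄ + (x₁ + x₄ - 2) * t) /
        (2 * Real.sqrt ((x₁ - t) * (x₄ - t) * (1 - x₁) * (x₄ - 1)))) / π := by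
  have h1a : 0 < 1 - x₁ := by linarith
  have hb1 : 0 < x₄ - 1 := by linarith
  have hat : 0 < x₁ - t := by linarith
  have hbt : 0 < x₄ - t := by linarith
  rw [ftc_key hC htx hx1 hx4]
  set m := Real.sqrt (1 - x₁) with hm
  set n := Real.sqrt (x₄ - 1) with hn
  set pt := Real.sqrt (x₁ - t) with hpt
  set qt := Real.sqrt (x₄ - t) with hqt
  set r := Real.sqrt C with hr
  have hm0 : 0 < m := Real.sqrt_pos.2 h1a
  have hn0 : 0 < n := Real.sqrt_pos.2 hb1
  have hpt0 : 0 < pt := Real.sqrt_pos.2 hat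
  have hqt0 : 0 < qt := Real.sqrt_pos.2 hbt
  have hr0 : 0 < r := Real.sqrt_pos.2 hC
  have hm2 : m ^ 2 = 1 - x₁ := Real.sq_sqrt h1a.le
  have hn2 : n ^ 2 = x₄ - 1 := Real.sq_sqrt hb1.le
  have hpt2 : pt ^ 2 = x₁ - t := Real.sq_sqrt hat.le
  have hqt2 : qt ^ 2 = x₄ - t := Real.sq_sqrt hbt.le
  set v := n * pt / (m * qt) with hv
  have hv0 : 0 < v := by rw [hv]; positivity
  have hΛ : (x₁ + x₄ - 2 * x₁ * x₄ + (x₁ + x₄ - 2) * t) /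
      (2 * Real.sqrt ((x₁ - t) * (x₄ - t) * (1 - x₁) * (x₄ - 1))) = (1 - v ^ 2) / (2 * v) := by
    have hsplit : Real.sqrt ((x₁ - t) * (x₄ - t) * (1 - x₁) * (x₄ - 1)) = pt * qt * m * n := by
      rw [Real.sqrt_mul (by positivity), Real.sqrt_mul (by positivity),
        Real.sqrt_mul hat.le, ← hpt, ← hqt, ← hm, ← hn]
    rw [hsplit, show x₁ + x₄ - 2 * x₁ * x₄ + (x₁ + x₄ - 2) * t
        = m ^ 2 * qt ^ 2 - n ^ 2 * pt ^ 2 by rw [hm2, hn2, hpt2, hqt2]; ring, hv]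
    field_simp
  rw [hΛ, arctan_half_aux hv0]
  have hs2 : Real.sqrt (C * (x₄ - 1) * (1 - x₁)) = r * n * m := by
    rw [Real.sqrt_mul (by positivity), Real.sqrt_mul hC.le, ← hr, ← hn, ← hm]
  rw [hs2]
  have hπ : (0:ℝ) < π := Real.pi_pos
  field_simp
  ring
end

section
/- Assume Σ_{i,j} p_{i,j} = 1 and that the drift is zero, i.e., Σ_{i,j} i·p_{i,j} = 0 and Σ_{i,j} j·p_{i,j} = 0. Let X be a ℂ-valued function defined and differentiable on an open neighborhood of 1 in ℂ such that X(1) = 1 and K(X(y), y) = 0 for all y in this neighborhood. Then ã(1)·X′(1)² + (Σ_{i,j} ij·p_{i,j})·X′(1) + a(1) = 0. -/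
/-- The kernel `K(x,y) = a(x) y² + b(x) y + c(x)` as a function on `ℂ × ℂ`. -/
noncomputable def kernelFun (p : ℤ → ℤ → ℝ) (x y : ℂ) : ℂ :=
  ((p 1 1 : ℂ) * x ^ 2 + (p 0 1 : ℂ) * x + (p (-1) 1 : ℂ)) * y ^ 2 +
  ((p 1 0 : ℂ) * x ^ 2 + ((p 0 0 : ℂ) - 1) * x + (p (-1) 0 : ℂ)) * y +
  ((p 1 (-1) : ℂ) * x ^ 2 + (p 0 (-1) : ℂ) * x + (p (-1) (-1) : ℂ))

/-- for a zero-drift walk, if `X` is differentiable near `1`, `X(1) = 1` and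
`K(X(y), y) = 0` near `1`, then `ã(1) X'(1)² + (Σ ij p_{i,j}) X'(1) + a(1) = 0`. -/
theorem derivative_branch_quadratic (p : ℤ → ℤ → ℝ)
    (hpos : ∀ i j, 0 ≤ p i j)
    (hsum : ∑ i ∈ Finset.Icc (-1 : ℤ) 1, ∑ j ∈ Finset.Icc (-1 : ℤ) 1, p i j = 1)
    (hdx : ∑ i ∈ Finset.Icc (-1 : ℤ) 1, ∑ j ∈ Finset.Icc (-1 : ℤ) 1, (i : ℝ) * p i j = 0)
    (hdy : ∑ i ∈ Finset.Icc (-1 : ℤ) 1, ∑ j ∈ Finset.Icc (-1 : ℤ) 1, (j : ℝ) * p i j = 0)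
    (X : ℂ → ℂ) (U : Set ℂ) (hU : IsOpen U) (h1U : (1 : ℂ) ∈ U)
    (hdiff : ∀ y ∈ U, DifferentiableAt ℂ X y)
    (hX1 : X 1 = 1)
    (hK : ∀ y ∈ U, kernelFun p (X y) y = 0) :
    ((p 1 1 + p 1 0 + p 1 (-1) : ℝ) : ℂ) * (deriv X 1) ^ 2 +
      ((∑ i ∈ Finset.Icc (-1 : ℤ) 1, ∑ j ∈ Finset.Icc (-1 : ℤ) 1,
          (i : ℝ) * (j : ℝ) * p i j : ℝ) : ℂ) * deriv X 1 +
      ((p 1 1 + p 0 1 + p (-1) 1 : ℝ) : ℂ) = 0 := by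
  have h9 : (Finset.Icc (-1 : ℤ) 1) = {-1, 0, 1} := by decide
  rw [h9] at hsum hdx hdy ⊢
  norm_num [Finset.sum_insert, Finset.mem_insert, Finset.mem_singleton] at hsum hdx hdy ⊢
  -- Cast hypotheses to ℂ
  have h0 : (p (-1) (-1) : ℂ) + p (-1) 0 + p (-1) 1 + (p 0 (-1) + p 0 0 + p 0 1) +
      (p 1 (-1) + p 1 0 + p 1 1) = 1 := by
    have := congrArg (Complex.ofReal) hsum
    push_cast at this
    linear_combination this
  have h1 : -(p (-1) (-1) : ℂ) - p (-1) 0 - p (-1) 1 + (p 1 (-1) + p 1 0 + p 1 1) = 0 := by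
    have := congrArg (Complex.ofReal) hdx
    push_cast at this
    linear_combination this
  have h2 : -(p (-1) (-1) : ℂ) + p (-1) 1 + (-(p 0 (-1)) + p 0 1) + (-(p 1 (-1)) + p 1 1) = 0 := by
    have := congrArg (Complex.ofReal) hdy
    push_cast at this
    linear_combination this
  set d := deriv X 1 with hd
  set A : ℂ := ((p 1 1 : ℂ) + p 1 0 + p 1 (-1)) with hA
  set S : ℂ := ((p (-1) (-1) : ℂ) + -(p (-1) 1) + (-(p 1 (-1)) + p 1 1)) with hS
  set C : ℂ := ((p 1 1 : ℂ) + p 0 1 + p (-1) 1) with hC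
  set D : ℂ := (2 * (p 1 1 : ℂ) + p 1 0) with hD
  set E : ℂ := (2 * (p 1 1 : ℂ) + p 0 1) with hE
  set G : ℂ := ((p 1 1 : ℂ)) with hG
  -- the key algebraic identity
  have key : ∀ s v : ℂ, kernelFun p (1 + s * v) (1 + v) =
      v ^ 2 * (A * s ^ 2 + S * s + C + v * (D * s ^ 2 + E * s) + v ^ 2 * (G * s ^ 2)) := by
    intro s v
    simp only [kernelFun, hA, hS, hC, hD, hE, hG]
    linear_combination (1 + v + s * v + s * v ^ 2) * h0 + (s * v + s * v ^ 2) * h1 +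
      (v + s * v ^ 2) * h2
  -- slope facts
  have hXd : HasDerivAt X d 1 := (hdiff 1 h1U).hasDerivAt
  have hslope : Filter.Tendsto (slope X 1) (nhdsWithin 1 {(1:ℂ)}ᶜ) (nhds d) :=
    hasDerivAt_iff_tendsto_slope.mp hXd
  set Φ : ℂ → ℂ := fun y => A * (slope X 1 y) ^ 2 + S * slope X 1 y + C +
      (y - 1) * (D * (slope X 1 y) ^ 2 + E * slope X 1 y) +
      (y - 1) ^ 2 * (G * (slope X 1 y) ^ 2) with hΦ
  have hy1 : Filter.Tendsto (fun y : ℂ => y) (nhdsWithin 1 {(1:ℂ)}ᶜ) (nhds 1) :=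
    (continuous_id.tendsto 1).mono_left nhdsWithin_le_nhds
  have hΦtend : Filter.Tendsto Φ (nhdsWithin 1 {(1:ℂ)}ᶜ)
      (nhds (A * d ^ 2 + S * d + C + (1 - 1) * (D * d ^ 2 + E * d) +
        (1 - 1) ^ 2 * (G * d ^ 2))) := by
    apply Filter.Tendsto.add
    apply Filter.Tendsto.add
    apply Filter.Tendsto.add
    apply Filter.Tendsto.add
    · exact tendsto_const_nhds.mul (hslope.pow 2)
    · exact tendsto_const_nhds.mul hslope
    · exact tendsto_const_nhds
    · exact (hy1.sub tendsto_const_nhds).mul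
        ((tendsto_const_nhds.mul (hslope.pow 2)).add (tendsto_const_nhds.mul hslope))
    · exact ((hy1.sub tendsto_const_nhds).pow 2).mul (tendsto_const_nhds.mul (hslope.pow 2))
  have hΦzero : ∀ᶠ y in nhdsWithin 1 {(1:ℂ)}ᶜ, Φ y = 0 := by
    have hUev : ∀ᶠ y in nhdsWithin 1 {(1:ℂ)}ᶜ, y ∈ U :=
      eventually_nhdsWithin_of_eventually_nhds (hU.eventually_mem h1U)
    filter_upwards [hUev, self_mem_nhdsWithin] with y hyU hy1'
    have hv : (y - 1 : ℂ) ≠ 0 := sub_ne_zero.mpr hy1'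
    have hsv : slope X 1 y * (y - 1) = X y - 1 := by
      rw [slope_def_field, hX1]
      field_simp
    have hx : (1 : ℂ) + slope X 1 y * (y - 1) = X y := by rw [hsv]; ring
    have hyy : (1 : ℂ) + (y - 1) = y := by ring
    have := key (slope X 1 y) (y - 1)
    rw [hx, hyy, hK y hyU] at this
    have hv2 : ((y - 1) : ℂ) ^ 2 ≠ 0 := pow_ne_zero 2 hv
    have := (mul_eq_zero.mp this.symm).resolve_left hv2
    simpa [hΦ] using this
  have hΦtend0 : Filter.Tendsto Φ (nhdsWithin 1 {(1:ℂ)}ᶜ) (nhds 0) :=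
    Filter.Tendsto.congr' (Filter.EventuallyEq.symm hΦzero) tendsto_const_nhds
  have hfin : A * d ^ 2 + S * d + C + (1 - 1) * (D * d ^ 2 + E * d) +
      (1 - 1) ^ 2 * (G * d ^ 2) = 0 := tendsto_nhds_unique hΦtend hΦtend0
  linear_combination hfin
end

section
/- Assume Σ_{i,j} p_{i,j} = 1 and that the drift is zero, i.e., Σ_{i,j} i·p_{i,j} = 0 and Σ_{i,j} j·p_{i,j} = 0. Then the quartic polynomial D(x) = b(x)² − 4a(x)c(x) has a double root at x = 1, i.e., D(1) = 0 and D′(1) = 0. -/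
open Polynomial

/-- The polynomial `a(x) = p_{1,1} x² + p_{0,1} x + p_{-1,1}`. -/
noncomputable def polyAR (p : ℤ → ℤ → ℝ) : Polynomial ℝ :=
  C (p 1 1) * X ^ 2 + C (p 0 1) * X + C (p (-1) 1)

/-- The polynomial `b(x) = p_{1,0} x² + (p_{0,0} - 1) x + p_{-1,0}`. -/
noncomputable def polyBR (p : ℤ → ℤ → ℝ) : Polynomial ℝ :=
  C (p 1 0) * X ^ 2 + C (p 0 0 - 1) * X + C (p (-1) 0)

/-- The polynomial `c(x) = p_{1,-1} x² + p_{0,-1} x + p_{-1,-1}`. -/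
noncomputable def polyCR (p : ℤ → ℤ → ℝ) : Polynomial ℝ :=
  C (p 1 (-1)) * X ^ 2 + C (p 0 (-1)) * X + C (p (-1) (-1))

/-- The discriminant `D(x) = b(x)² - 4 a(x) c(x)` of the kernel `K(x, ·)`. -/
noncomputable def polyDR (p : ℤ → ℤ → ℝ) : Polynomial ℝ :=
  polyBR p ^ 2 - 4 * polyAR p * polyCR p

/-- if the jump probabilities sum to 1 and the drift is zero, then
`D(x) = b(x)² - 4a(x)c(x)` has a double root at `x = 1`: `D(1) = 0` and `D'(1) = 0`. -/
theorem discriminant_double_root_at_one (p : ℤ → ℤ → ℝ)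
    (hpos : ∀ i j, 0 ≤ p i j)
    (hsum : ∑ i ∈ Finset.Icc (-1 : ℤ) 1, ∑ j ∈ Finset.Icc (-1 : ℤ) 1, p i j = 1)
    (hdx : ∑ i ∈ Finset.Icc (-1 : ℤ) 1, ∑ j ∈ Finset.Icc (-1 : ℤ) 1, (i : ℝ) * p i j = 0)
    (hdy : ∑ i ∈ Finset.Icc (-1 : ℤ) 1, ∑ j ∈ Finset.Icc (-1 : ℤ) 1, (j : ℝ) * p i j = 0) :
    (polyDR p).eval 1 = 0 ∧ ((polyDR p).derivative).eval 1 = 0 := by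
  have hIcc : Finset.Icc (-1 : ℤ) 1 = {-1, 0, 1} := by decide
  rw [hIcc] at hsum hdx hdy
  simp [Finset.sum_insert, Finset.mem_insert] at hsum hdx hdy
  simp only [polyDR, polyAR, polyBR, polyCR, derivative_sub, derivative_mul, derivative_pow,
    derivative_add, derivative_C, derivative_X, derivative_ofNat, eval_sub, eval_add, eval_mul,
    eval_pow, eval_C, eval_X, eval_one, eval_zero, eval_ofNat]
  ring_nf
  constructor
  · linear_combination (p 1 1 + p 0 1 + p (-1) 1 - p 1 (-1) - p 0 (-1) - p (-1) (-1)) * hdy +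
      (p 1 0 + p 0 0 - 1 + p (-1) 0 - p 1 1 - p 0 1 - p (-1) 1 - p 1 (-1) - p 0 (-1) -
        p (-1) (-1)) * hsum
  · linear_combination (2 * (2 * p 1 0 + p 0 0 - 1) - 4 * (p 1 (-1) + p 0 (-1) + p (-1) (-1))) * hsum +
      (-2 * (2 * p 1 0 + p 0 0 - 1) - 4 * (2 * p 1 (-1) + p 0 (-1))) * hdy +
      (-4 * (p 1 (-1) + p 0 (-1) + p (-1) (-1))) * hdx
end

section
/- Assume Σ_{i,j} p_{i,j} = 1 and that the drift is zero, i.e., Σ_{i,j} i·p_{i,j} = 0 and Σ_{i,j} j·p_{i,j} = 0. Then the determinant Δ = det [[p_{1,1}, p_{1,0}, p_{1,-1}], [p_{0,1}, p_{0,0}−1, p_{0,-1}], [p_{-1,1}, p_{-1,0}, p_{-1,-1}]] satisfies Δ = −a(1)·ã(1)·Σ_{i,j} ij·p_{i,j}. -/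
/-- for zero-drift jump probabilities summing to 1, the determinant
`Δ = det [[p₁₁, p₁₀, p₁₋₁], [p₀₁, p₀₀-1, p₀₋₁], [p₋₁₁, p₋₁₀, p₋₁₋₁]]` equals
`- a(1) ã(1) Σ_{i,j} ij p_{i,j}`. -/
theorem determinant_delta_formula (p : ℤ → ℤ → ℝ)
    (hsum : ∑ i ∈ Finset.Icc (-1 : ℤ) 1, ∑ j ∈ Finset.Icc (-1 : ℤ) 1, p i j = 1)
    (hdx : ∑ i ∈ Finset.Icc (-1 : ℤ) 1, ∑ j ∈ Finset.Icc (-1 : ℤ) 1, (i : ℝ) * p i j = 0)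
    (hdy : ∑ i ∈ Finset.Icc (-1 : ℤ) 1, ∑ j ∈ Finset.Icc (-1 : ℤ) 1, (j : ℝ) * p i j = 0) :
    Matrix.det !![p 1 1, p 1 0, p 1 (-1);
                  p 0 1, p 0 0 - 1, p 0 (-1);
                  p (-1) 1, p (-1) 0, p (-1) (-1)] =
      -((p 1 1 + p 0 1 + p (-1) 1) * (p 1 1 + p 1 0 + p 1 (-1)) *
        ∑ i ∈ Finset.Icc (-1 : ℤ) 1, ∑ j ∈ Finset.Icc (-1 : ℤ) 1, (i : ℝ) * (j : ℝ) * p i j) := by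
  have hset : Finset.Icc (-1 : ℤ) 1 = {-1, 0, 1} := by decide
  rw [hset] at hsum hdx hdy ⊢
  simp [Finset.sum_insert, Matrix.det_fin_three] at hsum hdx hdy ⊢
  linear_combination
    (p (-1) (-1) * p 1 1 - p (-1) 1 * p 1 (-1)) * hsum +
    (p (-1) 1 * p 0 (-1) - p 1 (-1) * p 1 1 + p 1 1 * p 1 1 - p (-1) 1 * p 0 1
      - p 0 1 * p 1 (-1) + p 0 1 * p 1 1 + p (-1) (-1) * p (-1) 1
      - p (-1) 1 * p (-1) 1) * hdx +
    (p (-1) 1 * p 1 1 - p (-1) (-1) * p (-1) 1 - p (-1) 0 * p (-1) 1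
      - p (-1) 1 * p (-1) 1 + p (-1) (-1) * p 1 1 + p (-1) 0 * p 1 1) * hdy
end

section
/- Let n ≥ 3 be an integer and consider the walk with p_{1,0} = p_{-1,0} = sin²(π/n)/2, p_{-1,1} = p_{1,-1} = 1/2 − sin²(π/n)/2, and all other p_{i,j} = 0. Then the drift is zero, the angle θ = arccos(−R), where R = (Σ_{i,j} ij·p_{i,j})/(√(Σ_{i,j} i²·p_{i,j})·√(Σ_{i,j} j²·p_{i,j})), equals π/n, and the group of the walk W is finite of order 2n. -/
open Polynomial

/-- The kernel `K(x,y) = xy(Σ_{-1≤i,j≤1} p_{i,j} x^i y^j - 1)` as an element of `ℂ[x,y]`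
(written with nonnegative exponents `i+1, j+1 ∈ {0,1,2}`). -/
noncomputable def kernelK (p : ℤ → ℤ → ℝ) : MvPolynomial (Fin 2) ℂ :=
  (∑ i ∈ Finset.Icc (-1 : ℤ) 1, ∑ j ∈ Finset.Icc (-1 : ℤ) 1,
      MvPolynomial.C (p i j : ℂ) * MvPolynomial.X 0 ^ (i + 1).toNat *
        MvPolynomial.X 1 ^ (j + 1).toNat)
    - MvPolynomial.X 0 * MvPolynomial.X 1

/-- `a(x) = p_{1,1} x² + p_{0,1} x + p_{-1,1}` as a polynomial over `ℂ`. -/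
noncomputable def polyA (p : ℤ → ℤ → ℝ) : Polynomial ℂ :=
  C (p 1 1 : ℂ) * X ^ 2 + C (p 0 1 : ℂ) * X + C (p (-1) 1 : ℂ)

/-- `c(x) = p_{1,-1} x² + p_{0,-1} x + p_{-1,-1}` as a polynomial over `ℂ`. -/
noncomputable def polyC (p : ℤ → ℤ → ℝ) : Polynomial ℂ :=
  C (p 1 (-1) : ℂ) * X ^ 2 + C (p 0 (-1) : ℂ) * X + C (p (-1) (-1) : ℂ)

/-- `ã(y) = p_{1,1} y² + p_{1,0} y + p_{1,-1}` as a polynomial over `ℂ`. -/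
noncomputable def polyAt (p : ℤ → ℤ → ℝ) : Polynomial ℂ :=
  C (p 1 1 : ℂ) * X ^ 2 + C (p 1 0 : ℂ) * X + C (p 1 (-1) : ℂ)

/-- `c̃(y) = p_{-1,1} y² + p_{-1,0} y + p_{-1,-1}` as a polynomial over `ℂ`. -/
noncomputable def polyCt (p : ℤ → ℤ → ℝ) : Polynomial ℂ :=
  C (p (-1) 1 : ℂ) * X ^ 2 + C (p (-1) 0 : ℂ) * X + C (p (-1) (-1) : ℂ)

/-- The quotient ring `ℂ[x,y]/(K)`. -/
abbrev QuotK (p : ℤ → ℤ → ℝ) : Type :=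
  MvPolynomial (Fin 2) ℂ ⧸ Ideal.span {kernelK p}

/-- The image `x̄` of `x` in a fraction field `F` of `ℂ[x,y]/(K)`. -/
noncomputable def xbar (p : ℤ → ℤ → ℝ) (F : Type*) [Field F] [Algebra (QuotK p) F] : F :=
  algebraMap (QuotK p) F (Ideal.Quotient.mk (Ideal.span {kernelK p}) (MvPolynomial.X 0))

/-- The image `ȳ` of `y` in a fraction field `F` of `ℂ[x,y]/(K)`. -/
noncomputable def ybar (p : ℤ → ℤ → ℝ) (F : Type*) [Field F] [Algebra (QuotK p) F] : F :=
  algebraMap (QuotK p) F (Ideal.Quotient.mk (Ideal.span {kernelK p}) (MvPolynomial.X 1))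

/-- The correlation coefficient `R` of the walk. -/
noncomputable def corrR (p : ℤ → ℤ → ℝ) : ℝ :=
  (∑ i ∈ Finset.Icc (-1 : ℤ) 1, ∑ j ∈ Finset.Icc (-1 : ℤ) 1, (i : ℝ) * (j : ℝ) * p i j) /
    (Real.sqrt (∑ i ∈ Finset.Icc (-1 : ℤ) 1, ∑ j ∈ Finset.Icc (-1 : ℤ) 1, (i : ℝ) ^ 2 * p i j) *
     Real.sqrt (∑ i ∈ Finset.Icc (-1 : ℤ) 1, ∑ j ∈ Finset.Icc (-1 : ℤ) 1, (j : ℝ) ^ 2 * p i j))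

/-- The angle `θ = arccos(-R)`. -/
noncomputable def theta (p : ℤ → ℤ → ℝ) : ℝ := Real.arccos (-(corrR p))

/-- The jump probabilities of the walk of Kurkova–Raschel:
`p_{1,0} = p_{-1,0} = sin²(π/n)/2`, `p_{-1,1} = p_{1,-1} = 1/2 - sin²(π/n)/2`, others `0`. -/
noncomputable def pKR (n : ℕ) : ℤ → ℤ → ℝ := fun i j =>
  if (i = 1 ∧ j = 0) ∨ (i = -1 ∧ j = 0) then Real.sin (Real.pi / n) ^ 2 / 2
  else if (i = -1 ∧ j = 1) ∨ (i = 1 ∧ j = -1) then 1 / 2 - Real.sin (Real.pi / n) ^ 2 / 2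
  else 0


lemma hIccKR : Finset.Icc (-1 : ℤ) 1 = {-1, 0, 1} := by
  ext x
  simp [Finset.mem_Icc, Finset.mem_insert]
  omega

lemma dihedral_count {G : Type*} [Group G] (ξ δ η : G) (n : ℕ) (hn : 1 ≤ n)
    (hξ2 : ξ * ξ = 1) (hrel : ξ * δ * ξ = δ⁻¹) (hord : orderOf δ = n)
    (hξD : ξ ∉ Subgroup.zpowers δ) (hη : η = δ * ξ) :
    ((Subgroup.closure {ξ, η} : Subgroup G) : Set G).Finite ∧
    Nat.card ↥(Subgroup.closure {ξ, η} : Subgroup G) = 2 * n := by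
  have hfin : IsOfFinOrder δ := by
    rw [← orderOf_pos_iff, hord]; omega
  have hinv : ξ⁻¹ = ξ := inv_eq_of_mul_eq_one_left hξ2
  have hxx : ∀ c : G, ξ * (ξ * c) = c := fun c => by rw [← mul_assoc, hξ2, one_mul]
  set D := Subgroup.zpowers δ with hD
  have hconj : ∀ g ∈ D, ξ * g * ξ ∈ D := by
    rintro g ⟨k, rfl⟩
    have h1 : ξ * δ ^ k * ξ = (δ⁻¹) ^ k := by
      have := map_zpow (MulAut.conj ξ) δ k
      simpa [MulAut.conj_apply, hinv, hrel] using this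
    rw [h1]
    exact Subgroup.zpow_mem _ (Subgroup.inv_mem _ (Subgroup.mem_zpowers δ)) k
  let S : Subgroup G :=
    { carrier := {g | g ∈ D ∨ ξ * g ∈ D}
      one_mem' := Or.inl (one_mem D)
      mul_mem' := by
        rintro a b (ha | ha) (hb | hb)
        · exact Or.inl (mul_mem ha hb)
        · refine Or.inr ?_
          have : ξ * (a * b) = (ξ * a * ξ) * (ξ * b) := by
            simp [mul_assoc, hxx]
          rw [this]
          exact mul_mem (hconj a ha) hb
        · refine Or.inr ?_
          rw [← mul_assoc]
          exact mul_mem ha hb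
        · refine Or.inl ?_
          have hab : a * b = (ξ * (ξ * a) * ξ) * (ξ * b) := by
            simp [mul_assoc, hxx]
          rw [hab]
          exact mul_mem (hconj _ ha) hb
      inv_mem' := by
        rintro a (ha | ha)
        · exact Or.inl (inv_mem ha)
        · refine Or.inr ?_
          have : ξ * a⁻¹ = ξ * (ξ * a)⁻¹ * ξ := by
            rw [mul_inv_rev, hinv]; simp [mul_assoc, hxx, hξ2]
          rw [this]
          exact hconj _ (inv_mem ha) }
  have hSmem : ∀ g, g ∈ S ↔ g ∈ D ∨ ξ * g ∈ D := fun g => Iff.rfl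
  have hδcl : δ ∈ Subgroup.closure {ξ, η} := by
    have hξc : ξ ∈ Subgroup.closure {ξ, η} :=
      Subgroup.subset_closure (by simp)
    have hηc : η ∈ Subgroup.closure {ξ, η} :=
      Subgroup.subset_closure (by simp)
    have : δ = η * ξ := by rw [hη, mul_assoc, hξ2, mul_one]
    rw [this]; exact mul_mem hηc hξc
  have hcl : Subgroup.closure {ξ, η} = S := by
    apply le_antisymm
    · rw [Subgroup.closure_le]
      rintro g (rfl | rfl)
      · exact Or.inr (by rw [hξ2]; exact one_mem D)
      · refine Or.inr ?_
        rw [hη, ← mul_assoc, hrel]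
        exact Subgroup.inv_mem _ (Subgroup.mem_zpowers δ)
    · rintro g (hg | hg)
      · exact Subgroup.zpowers_le.mpr hδcl hg
      · have hg2 : g = ξ * (ξ * g) := (hxx g).symm
        rw [hg2]
        exact mul_mem (Subgroup.subset_closure (by simp))
          (Subgroup.zpowers_le.mpr hδcl hg)
  -- counting
  have hDfin : (D : Set G).Finite := hfin.finite_zpowers
  have hScarrier : (S : Set G) = (D : Set G) ∪ (fun h => ξ * h) '' (D : Set G) := by
    ext g
    simp only [Set.mem_union, Set.mem_image]
    constructor
    · rintro (hg | hg)
      · exact Or.inl hg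
      · exact Or.inr ⟨ξ * g, hg, hxx g⟩
    · rintro (hg | ⟨d, hd, rfl⟩)
      · exact Or.inl hg
      · exact Or.inr (by rw [hxx]; exact hd)
  have hdisj : Disjoint (D : Set G) ((fun h => ξ * h) '' (D : Set G)) := by
    rw [Set.disjoint_left]
    rintro g hg ⟨d, hd, rfl⟩
    apply hξD
    have : ξ = (ξ * d) * d⁻¹ := by group
    rw [this]
    exact mul_mem hg (inv_mem hd)
  have hinj : Function.Injective (fun h : G => ξ * h) := fun a b h => by
    simpa using h
  have himgfin : ((fun h => ξ * h) '' (D : Set G)).Finite := hDfin.image _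
  have hcardD : (D : Set G).ncard = n := by
    rw [← Nat.card_coe_set_eq]
    rw [SetLike.coe_sort_coe, Nat.card_zpowers, hord]
  have hcardS : (S : Set G).ncard = 2 * n := by
    rw [hScarrier, Set.ncard_union_eq hdisj hDfin himgfin,
      Set.ncard_image_of_injective _ hinj, hcardD]
    ring
  constructor
  · rw [hcl, hScarrier]; exact hDfin.union himgfin
  · have hh : Nat.card ↥S = (S : Set G).ncard := by
      rw [← SetLike.coe_sort_coe, Nat.card_coe_set_eq]
    rw [hcl, hh, hcardS]

set_option maxHeartbeats 1600000 in
/-- for `n ≥ 3`, the above walk has zero drift, angle `θ = π/n`, and its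
group `W = ⟨ξ, η⟩` is finite of order `2n`. -/
theorem kurkova_raschel_group_order_2n (n : ℕ) (hn : 3 ≤ n)
    (F : Type) [Field F] [Algebra ℂ F] [Algebra (QuotK (pKR n)) F]
    [IsScalarTower ℂ (QuotK (pKR n)) F] [IsFractionRing (QuotK (pKR n)) F]
    (ξ η : F ≃ₐ[ℂ] F)
    (hξx : ξ (xbar (pKR n) F) = xbar (pKR n) F)
    (hξy : ξ (ybar (pKR n) F) =
      Polynomial.aeval (xbar (pKR n) F) (polyC (pKR n)) /
        (Polynomial.aeval (xbar (pKR n) F) (polyA (pKR n)) * ybar (pKR n) F))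
    (hηy : η (ybar (pKR n) F) = ybar (pKR n) F)
    (hηx : η (xbar (pKR n) F) =
      Polynomial.aeval (ybar (pKR n) F) (polyCt (pKR n)) /
        (Polynomial.aeval (ybar (pKR n) F) (polyAt (pKR n)) * xbar (pKR n) F)) :
    (∑ i ∈ Finset.Icc (-1 : ℤ) 1, ∑ j ∈ Finset.Icc (-1 : ℤ) 1, (i : ℝ) * pKR n i j = 0) ∧
    (∑ i ∈ Finset.Icc (-1 : ℤ) 1, ∑ j ∈ Finset.Icc (-1 : ℤ) 1, (j : ℝ) * pKR n i j = 0) ∧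
    theta (pKR n) = Real.pi / n ∧
    ((Subgroup.closure {ξ, η} : Subgroup (F ≃ₐ[ℂ] F)) : Set (F ≃ₐ[ℂ] F)).Finite ∧
    Nat.card ↥(Subgroup.closure {ξ, η} : Subgroup (F ≃ₐ[ℂ] F)) = 2 * n := by
  classical
  have hnR : (0:ℝ) < n := by positivity
  have hnne : (n:ℝ) ≠ 0 := ne_of_gt hnR
  set sr : ℝ := Real.sin (Real.pi / n) with hsr
  set cr : ℝ := Real.cos (Real.pi / n) with hcr
  have hlt : Real.pi / n < Real.pi / 2 := by
    apply div_lt_div_of_pos_left Real.pi_pos (by norm_num)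
    exact_mod_cast by omega
  have hposθ : 0 < Real.pi / n := by positivity
  have hcos : 0 < cr := Real.cos_pos_of_mem_Ioo ⟨by linarith [Real.pi_pos], hlt⟩
  have hpyth : sr ^ 2 + cr ^ 2 = 1 := Real.sin_sq_add_cos_sq _
  -- Part 1 : drift in x
  have part1 : ∑ i ∈ Finset.Icc (-1 : ℤ) 1, ∑ j ∈ Finset.Icc (-1 : ℤ) 1,
      (i : ℝ) * pKR n i j = 0 := by
    rw [hIccKR]
    simp [Finset.sum_insert, pKR]
    ring
  -- Part 2 : drift in y
  have part2 : ∑ i ∈ Finset.Icc (-1 : ℤ) 1, ∑ j ∈ Finset.Icc (-1 : ℤ) 1,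
      (j : ℝ) * pKR n i j = 0 := by
    rw [hIccKR]
    simp [Finset.sum_insert, pKR]
  -- Part 3 : theta
  have part3 : theta (pKR n) = Real.pi / n := by
    have hA : (∑ i ∈ Finset.Icc (-1 : ℤ) 1, ∑ j ∈ Finset.Icc (-1 : ℤ) 1,
        (i : ℝ) ^ 2 * pKR n i j) = 1 := by
      rw [hIccKR]; simp [Finset.sum_insert, pKR]; linarith
    have hB : (∑ i ∈ Finset.Icc (-1 : ℤ) 1, ∑ j ∈ Finset.Icc (-1 : ℤ) 1,
        (j : ℝ) ^ 2 * pKR n i j) = cr ^ 2 := by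
      rw [hIccKR]; simp [Finset.sum_insert, pKR]; linarith
    have hnum : (∑ i ∈ Finset.Icc (-1 : ℤ) 1, ∑ j ∈ Finset.Icc (-1 : ℤ) 1,
        (i : ℝ) * (j : ℝ) * pKR n i j) = -cr ^ 2 := by
      rw [hIccKR]; simp [Finset.sum_insert, pKR]; linarith
    have hR : corrR (pKR n) = -cr := by
      rw [corrR, hA, hB, hnum, Real.sqrt_one, Real.sqrt_sq hcos.le]
      field_simp
    rw [theta, hR, neg_neg, hcr, Real.arccos_cos hposθ.le]
    linarith [Real.pi_pos, (by
      apply div_le_self Real.pi_pos.le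
      exact_mod_cast by omega : Real.pi / n ≤ Real.pi)]
  -- ζ and its properties
  set ζ : ℂ := Complex.exp ((Real.pi / n : ℝ) * Complex.I) with hζ
  have hζ0 : ζ ≠ 0 := Complex.exp_ne_zero _
  have hsinζ : ((sr : ℝ) : ℂ) = (ζ⁻¹ - ζ) * Complex.I / 2 := by
    rw [hsr]
    rw [Complex.ofReal_sin]
    rw [Complex.sin, hζ, ← Complex.exp_neg]
    ring_nf
  have hs2ζ : 4 * ζ^2 * ((sr:ℝ):ℂ)^2 = -(ζ^2-1)^2 := by
    rw [hsinζ]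
    have hI := Complex.I_sq
    field_simp
    ring_nf
    rw [hI]
    ring
  have hprim : IsPrimitiveRoot (ζ^2) n := by
    have h := Complex.isPrimitiveRoot_exp n (by omega)
    have : ζ^2 = Complex.exp (2 * Real.pi * Complex.I / n) := by
      rw [hζ, ← Complex.exp_nat_mul]
      congr 1
      push_cast
      field_simp
    rw [this]; exact h
  have hζm : ζ^2 - 1 ≠ 0 := by
    intro h
    have h1 : ζ^2 = 1 := by linear_combination h
    have := hprim.dvd_of_pow_eq_one 1 (by simpa using h1)
    have := Nat.le_of_dvd one_pos this
    omega
  have hζp : ζ^2 + 1 ≠ 0 := by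
    intro h
    have h1 : (ζ^2)^2 = 1 := by linear_combination (ζ^2 - 1) * h
    have := hprim.dvd_of_pow_eq_one 2 (by simpa using h1)
    have := Nat.le_of_dvd two_pos this
    omega
  -- quotient map infrastructure
  set I : Ideal (MvPolynomial (Fin 2) ℂ) := Ideal.span {kernelK (pKR n)} with hI
  set Φ : MvPolynomial (Fin 2) ℂ →+* F :=
    ((algebraMap (QuotK (pKR n)) F).comp (Ideal.Quotient.mk I)) with hΦ
  have hΦC : ∀ a : ℂ, Φ (MvPolynomial.C a) = algebraMap ℂ F a := by
    intro a
    calc Φ (MvPolynomial.C a)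
        = algebraMap (QuotK (pKR n)) F (Ideal.Quotient.mk I (algebraMap ℂ _ a)) := rfl
      _ = algebraMap (QuotK (pKR n)) F (algebraMap ℂ (QuotK (pKR n)) a) := rfl
      _ = algebraMap ℂ F a := by rw [← IsScalarTower.algebraMap_apply]
  have hkex : kernelK (pKR n) =
      MvPolynomial.C ((sr^2/2 : ℝ) : ℂ) * (MvPolynomial.X 0)^2 * MvPolynomial.X 1
      + MvPolynomial.C ((sr^2/2 : ℝ) : ℂ) * MvPolynomial.X 1
      + MvPolynomial.C ((1/2 - sr^2/2 : ℝ) : ℂ) * (MvPolynomial.X 1)^2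
      + MvPolynomial.C ((1/2 - sr^2/2 : ℝ) : ℂ) * (MvPolynomial.X 0)^2
      - MvPolynomial.X 0 * MvPolynomial.X 1 := by
    rw [kernelK, hIccKR]
    simp [Finset.sum_insert, pKR, hsr]
    ring
  have hker : ∀ (q : MvPolynomial (Fin 2) ℂ) (pt : Fin 2 → ℂ),
      MvPolynomial.eval pt (kernelK (pKR n)) = 0 → MvPolynomial.eval pt q ≠ 0 →
      Φ q ≠ 0 := by
    intro q pt h0 hq hΦq
    have hmk : Ideal.Quotient.mk I q = 0 := by
      apply IsFractionRing.injective (QuotK (pKR n)) F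
      rw [map_zero]
      exact hΦq
    rw [Ideal.Quotient.eq_zero_iff_mem, hI, Ideal.mem_span_singleton] at hmk
    obtain ⟨g, rfl⟩ := hmk
    rw [map_mul, h0, zero_mul] at hq
    exact hq rfl
  have hK0 : Φ (kernelK (pKR n)) = 0 := by
    rw [hΦ, RingHom.comp_apply]
    have : Ideal.Quotient.mk I (kernelK (pKR n)) = 0 := by
      rw [Ideal.Quotient.eq_zero_iff_mem, hI]
      exact Ideal.subset_span rfl
    rw [this, map_zero]
  have h0K : MvPolynomial.eval (fun _ => (0:ℂ)) (kernelK (pKR n)) = 0 := by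
    rw [hkex]; simp
  have h1K : MvPolynomial.eval (fun _ => (1:ℂ)) (kernelK (pKR n)) = 0 := by
    rw [hkex]; simp
    push_cast
    ring
  -- F-side elements
  set z : F := algebraMap ℂ F ζ with hz
  set Xv : F := xbar (pKR n) F with hXv
  set Yv : F := ybar (pKR n) F with hYv
  have hXvΦ : Xv = Φ (MvPolynomial.X 0) := rfl
  have hYvΦ : Yv = Φ (MvPolynomial.X 1) := rfl
  have hCne : ∀ a : ℂ, a ≠ 0 → algebraMap ℂ F a ≠ 0 := by
    intro a ha h
    exact ha ((algebraMap ℂ F).injective (by rw [h, map_zero]))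
  have hzC : ∀ a : ℂ, z = algebraMap ℂ F a → ζ = a := by
    intro a ha
    exact (algebraMap ℂ F).injective ha
  have hzm : z^2 - 1 ≠ 0 := by
    have h : z^2 - 1 = algebraMap ℂ F (ζ^2 - 1) := by
      rw [hz]; simp only [map_sub, map_pow, map_one]
    rw [h]; exact hCne _ hζm
  have hzp : z^2 + 1 ≠ 0 := by
    have h : z^2 + 1 = algebraMap ℂ F (ζ^2 + 1) := by
      rw [hz]; simp only [map_add, map_pow, map_one]
    rw [h]; exact hCne _ hζp
  have hz0 : z ≠ 0 := by
    rw [hz]; exact hCne _ hζ0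
  have hz20 : z^2 ≠ 0 := pow_ne_zero 2 hz0
  have h80 : (8:F) ≠ 0 := by
    rw [show (8:F) = algebraMap ℂ F 8 from (map_ofNat (algebraMap ℂ F) 8).symm]
    exact hCne _ (by norm_num)
  have h20 : (2:F) ≠ 0 := by
    rw [show (2:F) = algebraMap ℂ F 2 from (map_ofNat (algebraMap ℂ F) 2).symm]
    exact hCne _ (by norm_num)
  have h8z2 : (8:F)*z^2 ≠ 0 := mul_ne_zero h80 hz20
  -- the kernel relation in F
  have hK0' := hK0
  rw [hkex] at hK0'
  simp only [map_add, map_sub, map_mul, map_pow, hΦC, ← hXvΦ, ← hYvΦ] at hK0'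
  have h8s : 8 * z^2 * algebraMap ℂ F ((sr^2/2:ℝ):ℂ) = -(z^2-1)^2 := by
    have hC : (8:ℂ) * ζ^2 * ((sr^2/2:ℝ):ℂ) = -(ζ^2-1)^2 := by
      push_cast
      push_cast at hs2ζ
      linear_combination hs2ζ
    calc 8 * z^2 * algebraMap ℂ F ((sr^2/2:ℝ):ℂ)
        = algebraMap ℂ F ((8:ℂ) * ζ^2 * ((sr^2/2:ℝ):ℂ)) := by
          rw [hz]; simp only [map_mul, map_pow, map_ofNat]
      _ = algebraMap ℂ F (-(ζ^2-1)^2) := by rw [hC]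
      _ = -(z^2-1)^2 := by rw [hz]; simp only [map_neg, map_pow, map_sub, map_one]
  have h8q : 8 * z^2 * algebraMap ℂ F ((1/2 - sr^2/2:ℝ):ℂ) = (z^2+1)^2 := by
    have hC : (8:ℂ) * ζ^2 * ((1/2 - sr^2/2:ℝ):ℂ) = (ζ^2+1)^2 := by
      push_cast
      push_cast at hs2ζ
      linear_combination -hs2ζ
    calc 8 * z^2 * algebraMap ℂ F ((1/2 - sr^2/2:ℝ):ℂ)
        = algebraMap ℂ F ((8:ℂ) * ζ^2 * ((1/2 - sr^2/2:ℝ):ℂ)) := by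
          rw [hz]; simp only [map_mul, map_pow, map_ofNat]
      _ = algebraMap ℂ F ((ζ^2+1)^2) := by rw [hC]
      _ = (z^2+1)^2 := by rw [hz]; simp only [map_pow, map_add, map_one]
  have hK2 : (z^2+1)^2*(Xv^2+Yv^2) - (z^2-1)^2*(Xv^2+1)*Yv - 8*z^2*(Xv*Yv) = 0 := by
    linear_combination (8*z^2) * hK0' + (-(Xv^2*Yv) - Yv) * h8s + (-(Yv^2) - Xv^2) * h8q
  -- nonvanishing
  have hX0 : Xv ≠ 0 := by
    rw [hXvΦ]; exact hker _ (fun _ => 1) h1K (by simp)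
  have hY0 : Yv ≠ 0 := by
    rw [hYvΦ]; exact hker _ (fun _ => 1) h1K (by simp)
  have hX1 : Xv - 1 ≠ 0 := by
    have h := hker (MvPolynomial.X 0 - 1) (fun _ => 0) h0K (by simp)
    rw [map_sub, map_one, ← hXvΦ] at h
    exact h
  have hY1 : Yv - 1 ≠ 0 := by
    have h := hker (MvPolynomial.X 1 - 1) (fun _ => 0) h0K (by simp)
    rw [map_sub, map_one, ← hYvΦ] at h
    exact h
  have hNp0 : ((z^2+1)*(Yv-1) - 2*z^2*(Xv-1)) ≠ 0 := by
    have h := hker (MvPolynomial.C (ζ^2+1) * (MvPolynomial.X 1 - 1)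
        - MvPolynomial.C (2*ζ^2) * (MvPolynomial.X 0 - 1)) (fun _ => 0) h0K ?_
    · have heq : Φ (MvPolynomial.C (ζ^2+1) * (MvPolynomial.X 1 - 1)
          - MvPolynomial.C (2*ζ^2) * (MvPolynomial.X 0 - 1)) = ((z^2+1)*(Yv-1) - 2*z^2*(Xv-1)) := by
        rw [map_sub, map_mul, map_mul, map_sub, map_sub, map_one, hΦC, hΦC,
          ← hXvΦ, ← hYvΦ, hz]
        simp only [map_add, map_mul, map_pow, map_one, map_ofNat]
      rw [heq] at h
      exact h
    · simp only [map_sub, map_mul, MvPolynomial.eval_C, MvPolynomial.eval_X,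
        map_one]
      intro h
      apply hζm
      linear_combination h
  have hNm0 : ((z^2+1)*(Yv-1) - 2*(Xv-1)) ≠ 0 := by
    have h := hker (MvPolynomial.C (ζ^2+1) * (MvPolynomial.X 1 - 1)
        - MvPolynomial.C 2 * (MvPolynomial.X 0 - 1)) (fun _ => 0) h0K ?_
    · have heq : Φ (MvPolynomial.C (ζ^2+1) * (MvPolynomial.X 1 - 1)
          - MvPolynomial.C 2 * (MvPolynomial.X 0 - 1)) = ((z^2+1)*(Yv-1) - 2*(Xv-1)) := by
        rw [map_sub, map_mul, map_mul, map_sub, map_sub, map_one, hΦC, hΦC,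
          ← hXvΦ, ← hYvΦ, hz]
        simp only [map_add, map_mul, map_pow, map_one, map_ofNat]
      rw [heq] at h
      exact h
    · simp only [map_sub, map_mul, MvPolynomial.eval_C, MvPolynomial.eval_X,
        map_one]
      intro h
      apply hζm
      linear_combination -h
  have hA20 : ((z^2+1)^2 - (z^2-1)^2*Yv) ≠ 0 := by
    have h := hker (MvPolynomial.C ((ζ^2+1)^2)
        - MvPolynomial.C ((ζ^2-1)^2) * MvPolynomial.X 1) (fun _ => 0) h0K ?_
    · have heq : Φ (MvPolynomial.C ((ζ^2+1)^2)
          - MvPolynomial.C ((ζ^2-1)^2) * MvPolynomial.X 1) = ((z^2+1)^2 - (z^2-1)^2*Yv) := by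
        rw [map_sub, map_mul, hΦC, hΦC, ← hYvΦ, hz]
        simp only [map_add, map_sub, map_mul, map_pow, map_one]
      rw [heq] at h
      exact h
    · simp only [map_sub, map_mul, MvPolynomial.eval_C, MvPolynomial.eval_X]
      intro h
      exact pow_ne_zero 2 hζp (by linear_combination h)
    -- values of pKR
  have hpv11 : pKR n 1 1 = 0 := by norm_num [pKR]
  have hpv01 : pKR n 0 1 = 0 := by norm_num [pKR]
  have hpvm11 : pKR n (-1) 1 = 1/2 - sr^2/2 := by norm_num [pKR, hsr]
  have hpv1m1 : pKR n 1 (-1) = 1/2 - sr^2/2 := by norm_num [pKR, hsr]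
  have hpv0m1 : pKR n 0 (-1) = 0 := by norm_num [pKR]
  have hpvm1m1 : pKR n (-1) (-1) = 0 := by norm_num [pKR]
  have hpv10 : pKR n 1 0 = sr^2/2 := by norm_num [pKR, hsr]
  have hpvm10 : pKR n (-1) 0 = sr^2/2 := by norm_num [pKR, hsr]
  -- the maps on Xv Yv in simplified form
  have hqC0 : ((1/2 - sr^2/2 : ℝ):ℂ) ≠ 0 := by
    rw [Complex.ofReal_ne_zero]
    nlinarith [hcos, hpyth]
  have hξY : ξ Yv = Xv^2 / Yv := by
    rw [hξy, polyA, polyC, hpv11, hpv01, hpvm11, hpv1m1, hpv0m1, hpvm1m1]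
    simp only [Complex.ofReal_zero, map_zero, zero_mul, map_add, map_mul,
      Polynomial.aeval_C, Polynomial.aeval_X, map_pow, zero_add, add_zero]
    rw [mul_div_mul_left _ _ (hCne _ hqC0)]
  have hηX : η Xv = ((z^2+1)^2*Yv^2 - (z^2-1)^2*Yv) / (((z^2+1)^2 - (z^2-1)^2*Yv) * Xv) := by
    rw [hηx, polyAt, polyCt, hpv11, hpvm11, hpv1m1, hpvm10, hpv10, hpvm1m1]
    simp only [Complex.ofReal_zero, map_zero, zero_mul, map_add, map_mul,
      Polynomial.aeval_C, Polynomial.aeval_X, map_pow, zero_add, add_zero]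
    have e1 : ((z^2+1)^2*Yv^2 - (z^2-1)^2*Yv) = (8*z^2) * (algebraMap ℂ F ((1/2 - sr^2/2:ℝ):ℂ) * Yv^2
        + algebraMap ℂ F ((sr^2/2:ℝ):ℂ) * Yv) := by
      linear_combination (-Yv) * h8s - Yv^2 * h8q
    have e2 : ((z^2+1)^2 - (z^2-1)^2*Yv) * Xv = (8*z^2) * ((algebraMap ℂ F ((sr^2/2:ℝ):ℂ) * Yv
        + algebraMap ℂ F ((1/2 - sr^2/2:ℝ):ℂ)) * Xv) := by
      linear_combination (-Yv*Xv) * h8s - Xv * h8q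
    rw [e1, e2, mul_div_mul_left _ _ h8z2]
  -- constants are fixed by every algebra automorphism
  have hcζ : ∀ σ : F ≃ₐ[ℂ] F, σ z = z := by
    intro σ; rw [hz]; exact σ.commutes ζ
  have hmapne : ∀ (σ : F ≃ₐ[ℂ] F) (a : F), a ≠ 0 → σ a ≠ 0 := by
    intro σ a ha h
    exact ha (σ.injective (by rw [h, map_zero]))
  -- action of ξ on f
  have hξNp : ξ ((z^2+1)*(Yv-1) - 2*z^2*(Xv-1)) = ((z^2+1)*(Xv^2-Yv) - 2*z^2*(Xv-1)*Yv) / Yv := by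
    simp only [map_sub, map_mul, map_add, map_pow, map_one, map_ofNat, hcζ, hξx, hξY]
    field_simp
  have hξNm : ξ ((z^2+1)*(Yv-1) - 2*(Xv-1)) = ((z^2+1)*(Xv^2-Yv) - 2*(Xv-1)*Yv) / Yv := by
    simp only [map_sub, map_mul, map_add, map_pow, map_one, map_ofNat, hcζ, hξx, hξY]
    field_simp
  have hMm0 : ((z^2+1)*(Xv^2-Yv) - 2*(Xv-1)*Yv) ≠ 0 := by
    have h : ((z^2+1)*(Xv^2-Yv) - 2*(Xv-1)*Yv) = ξ ((z^2+1)*(Yv-1) - 2*(Xv-1)) * Yv := (div_eq_iff hY0).mp hξNm.symm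
    rw [h]
    exact mul_ne_zero (hmapne ξ _ hNm0) hY0
  have hξfe : ξ (((z^2+1)*(Yv-1) - 2*z^2*(Xv-1))/((z^2+1)*(Yv-1) - 2*(Xv-1))) = z^2 / (((z^2+1)*(Yv-1) - 2*z^2*(Xv-1))/((z^2+1)*(Yv-1) - 2*(Xv-1))) := by
    rw [map_div₀, hξNp, hξNm, div_div_div_comm, div_self hY0, div_one,
      div_div_eq_mul_div, div_eq_div_iff hMm0 hNp0]
    linear_combination (z^2-1) * hK2
  -- action of η on f
  have hA20' : (z^2+1)^2 - Yv*(z^2-1)^2 ≠ 0 := by rw [mul_comm]; exact hA20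
  have hηNp : η ((z^2+1)*(Yv-1) - 2*z^2*(Xv-1)) = ((z^2+1)*(Yv-1)*(((z^2+1)^2 - (z^2-1)^2*Yv)*Xv) - 2*z^2*(((z^2+1)^2*Yv^2 - (z^2-1)^2*Yv) - ((z^2+1)^2 - (z^2-1)^2*Yv)*Xv)) / (((z^2+1)^2 - (z^2-1)^2*Yv) * Xv) := by
    simp only [map_sub, map_mul, map_add, map_pow, map_one, map_ofNat, hcζ, hηy, hηX]
    field_simp
  have hηNm : η ((z^2+1)*(Yv-1) - 2*(Xv-1)) = ((z^2+1)*(Yv-1)*(((z^2+1)^2 - (z^2-1)^2*Yv)*Xv) - 2*(((z^2+1)^2*Yv^2 - (z^2-1)^2*Yv) - ((z^2+1)^2 - (z^2-1)^2*Yv)*Xv)) / (((z^2+1)^2 - (z^2-1)^2*Yv) * Xv) := by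
    simp only [map_sub, map_mul, map_add, map_pow, map_one, map_ofNat, hcζ, hηy, hηX]
    field_simp
  have hPm0 : ((z^2+1)*(Yv-1)*(((z^2+1)^2 - (z^2-1)^2*Yv)*Xv) - 2*(((z^2+1)^2*Yv^2 - (z^2-1)^2*Yv) - ((z^2+1)^2 - (z^2-1)^2*Yv)*Xv)) ≠ 0 := by
    have h : ((z^2+1)*(Yv-1)*(((z^2+1)^2 - (z^2-1)^2*Yv)*Xv) - 2*(((z^2+1)^2*Yv^2 - (z^2-1)^2*Yv) - ((z^2+1)^2 - (z^2-1)^2*Yv)*Xv)) = η ((z^2+1)*(Yv-1) - 2*(Xv-1)) * (((z^2+1)^2 - (z^2-1)^2*Yv) * Xv) := (div_eq_iff (mul_ne_zero hA20 hX0)).mp hηNm.symm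
    rw [h]
    exact mul_ne_zero (hmapne η _ hNm0) (mul_ne_zero hA20 hX0)
  have hηfe : η (((z^2+1)*(Yv-1) - 2*z^2*(Xv-1))/((z^2+1)*(Yv-1) - 2*(Xv-1))) = 1 / (((z^2+1)*(Yv-1) - 2*z^2*(Xv-1))/((z^2+1)*(Yv-1) - 2*(Xv-1))) := by
    rw [map_div₀, hηNp, hηNm, div_div_div_comm, div_self (mul_ne_zero hA20 hX0),
      div_one, one_div_div, div_eq_div_iff hPm0 hNp0]
    linear_combination (2*(1 - z^2*z^2)*(Yv+1)) * hK2
  -- f and the rational parametrization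
  have hfe0 : (((z^2+1)*(Yv-1) - 2*z^2*(Xv-1))/((z^2+1)*(Yv-1) - 2*(Xv-1))) ≠ 0 := div_ne_zero hNp0 hNm0
  have hωf : z^2 - (((z^2+1)*(Yv-1) - 2*z^2*(Xv-1))/((z^2+1)*(Yv-1) - 2*(Xv-1))) ≠ 0 := by
    have h1 : z^2 - (((z^2+1)*(Yv-1) - 2*z^2*(Xv-1))/((z^2+1)*(Yv-1) - 2*(Xv-1))) = (z^2*((z^2+1)*(Yv-1) - 2*(Xv-1)) - ((z^2+1)*(Yv-1) - 2*z^2*(Xv-1)))/((z^2+1)*(Yv-1) - 2*(Xv-1)) := by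
      field_simp
    rw [h1]
    apply div_ne_zero _ hNm0
    have h2 : z^2*((z^2+1)*(Yv-1) - 2*(Xv-1)) - ((z^2+1)*(Yv-1) - 2*z^2*(Xv-1)) = (z^2-1)*((z^2+1)*(Yv-1)) := by ring
    rw [h2]
    exact mul_ne_zero hzm (mul_ne_zero hzp hY1)
  have hf1 : (1:F) - (((z^2+1)*(Yv-1) - 2*z^2*(Xv-1))/((z^2+1)*(Yv-1) - 2*(Xv-1))) ≠ 0 := by
    have h1 : (1:F) - (((z^2+1)*(Yv-1) - 2*z^2*(Xv-1))/((z^2+1)*(Yv-1) - 2*(Xv-1))) = (((z^2+1)*(Yv-1) - 2*(Xv-1)) - ((z^2+1)*(Yv-1) - 2*z^2*(Xv-1)))/((z^2+1)*(Yv-1) - 2*(Xv-1)) := by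
      field_simp
    rw [h1]
    apply div_ne_zero _ hNm0
    have h2 : ((z^2+1)*(Yv-1) - 2*(Xv-1)) - ((z^2+1)*(Yv-1) - 2*z^2*(Xv-1)) = 2*((z^2-1)*(Xv-1)) := by ring
    rw [h2]
    exact mul_ne_zero h20 (mul_ne_zero hzm hX1)
  have hXE : Xv * ((z^2*((z^2+1)*(Yv-1) - 2*(Xv-1)) - ((z^2+1)*(Yv-1) - 2*z^2*(Xv-1))) * (((z^2+1)*(Yv-1) - 2*(Xv-1)) - ((z^2+1)*(Yv-1) - 2*z^2*(Xv-1))))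
      = (z^2*((z^2+1)*(Yv-1) - 2*(Xv-1)) + ((z^2+1)*(Yv-1) - 2*z^2*(Xv-1))) * (((z^2+1)*(Yv-1) - 2*(Xv-1)) + ((z^2+1)*(Yv-1) - 2*z^2*(Xv-1))) := by
    linear_combination (-2*(z^2+1)) * hK2
  have hYE : Yv * ((((z^2+1)*(Yv-1) - 2*(Xv-1)) - ((z^2+1)*(Yv-1) - 2*z^2*(Xv-1))) * (((z^2+1)*(Yv-1) - 2*(Xv-1)) - ((z^2+1)*(Yv-1) - 2*z^2*(Xv-1))))
      = (((z^2+1)*(Yv-1) - 2*(Xv-1)) + ((z^2+1)*(Yv-1) - 2*z^2*(Xv-1))) * (((z^2+1)*(Yv-1) - 2*(Xv-1)) + ((z^2+1)*(Yv-1) - 2*z^2*(Xv-1))) := by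
    linear_combination (-4:F) * hK2
  have hXrat : Xv * ((z^2 - (((z^2+1)*(Yv-1) - 2*z^2*(Xv-1))/((z^2+1)*(Yv-1) - 2*(Xv-1))))*(1 - (((z^2+1)*(Yv-1) - 2*z^2*(Xv-1))/((z^2+1)*(Yv-1) - 2*(Xv-1))))) = (z^2 + (((z^2+1)*(Yv-1) - 2*z^2*(Xv-1))/((z^2+1)*(Yv-1) - 2*(Xv-1))))*(1 + (((z^2+1)*(Yv-1) - 2*z^2*(Xv-1))/((z^2+1)*(Yv-1) - 2*(Xv-1)))) := by
    have e1 : z^2 - (((z^2+1)*(Yv-1) - 2*z^2*(Xv-1))/((z^2+1)*(Yv-1) - 2*(Xv-1))) = (z^2*((z^2+1)*(Yv-1) - 2*(Xv-1)) - ((z^2+1)*(Yv-1) - 2*z^2*(Xv-1)))/((z^2+1)*(Yv-1) - 2*(Xv-1)) := by field_simp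
    have e2 : (1:F) - (((z^2+1)*(Yv-1) - 2*z^2*(Xv-1))/((z^2+1)*(Yv-1) - 2*(Xv-1))) = (((z^2+1)*(Yv-1) - 2*(Xv-1)) - ((z^2+1)*(Yv-1) - 2*z^2*(Xv-1)))/((z^2+1)*(Yv-1) - 2*(Xv-1)) := by field_simp
    have e3 : z^2 + (((z^2+1)*(Yv-1) - 2*z^2*(Xv-1))/((z^2+1)*(Yv-1) - 2*(Xv-1))) = (z^2*((z^2+1)*(Yv-1) - 2*(Xv-1)) + ((z^2+1)*(Yv-1) - 2*z^2*(Xv-1)))/((z^2+1)*(Yv-1) - 2*(Xv-1)) := by field_simp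
    have e4 : (1:F) + (((z^2+1)*(Yv-1) - 2*z^2*(Xv-1))/((z^2+1)*(Yv-1) - 2*(Xv-1))) = (((z^2+1)*(Yv-1) - 2*(Xv-1)) + ((z^2+1)*(Yv-1) - 2*z^2*(Xv-1)))/((z^2+1)*(Yv-1) - 2*(Xv-1)) := by field_simp
    rw [e1, e2, e3, e4, div_mul_div_comm, div_mul_div_comm, ← mul_div_assoc,
      div_eq_div_iff (mul_ne_zero hNm0 hNm0) (mul_ne_zero hNm0 hNm0)]
    linear_combination (((z^2+1)*(Yv-1) - 2*(Xv-1)) * ((z^2+1)*(Yv-1) - 2*(Xv-1))) * hXE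
  have hYrat : Yv * ((1 - (((z^2+1)*(Yv-1) - 2*z^2*(Xv-1))/((z^2+1)*(Yv-1) - 2*(Xv-1))))*(1 - (((z^2+1)*(Yv-1) - 2*z^2*(Xv-1))/((z^2+1)*(Yv-1) - 2*(Xv-1))))) = (1 + (((z^2+1)*(Yv-1) - 2*z^2*(Xv-1))/((z^2+1)*(Yv-1) - 2*(Xv-1))))*(1 + (((z^2+1)*(Yv-1) - 2*z^2*(Xv-1))/((z^2+1)*(Yv-1) - 2*(Xv-1)))) := by
    have e2 : (1:F) - (((z^2+1)*(Yv-1) - 2*z^2*(Xv-1))/((z^2+1)*(Yv-1) - 2*(Xv-1))) = (((z^2+1)*(Yv-1) - 2*(Xv-1)) - ((z^2+1)*(Yv-1) - 2*z^2*(Xv-1)))/((z^2+1)*(Yv-1) - 2*(Xv-1)) := by field_simp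
    have e4 : (1:F) + (((z^2+1)*(Yv-1) - 2*z^2*(Xv-1))/((z^2+1)*(Yv-1) - 2*(Xv-1))) = (((z^2+1)*(Yv-1) - 2*(Xv-1)) + ((z^2+1)*(Yv-1) - 2*z^2*(Xv-1)))/((z^2+1)*(Yv-1) - 2*(Xv-1)) := by field_simp
    rw [e2, e4, div_mul_div_comm, div_mul_div_comm, ← mul_div_assoc,
      div_eq_div_iff (mul_ne_zero hNm0 hNm0) (mul_ne_zero hNm0 hNm0)]
    linear_combination (((z^2+1)*(Yv-1) - 2*(Xv-1)) * ((z^2+1)*(Yv-1) - 2*(Xv-1))) * hYE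
  -- extensionality via Xv, Yv
  have hextXY : ∀ σ τ : F ≃ₐ[ℂ] F, σ Xv = τ Xv → σ Yv = τ Yv → σ = τ := by
    intro σ τ hx hy
    have hqr : ∀ r : MvPolynomial (Fin 2) ℂ, σ (Φ r) = τ (Φ r) := by
      intro r
      induction r using MvPolynomial.induction_on with
      | C c => rw [hΦC, σ.commutes, τ.commutes]
      | add p q hp hq => rw [map_add, map_add, map_add, hp, hq]
      | mul_X p i hp =>
        rw [map_mul, map_mul, map_mul, hp]
        congr 1
        fin_cases i
        · exact hx
        · exact hy
    have hQ : ∀ a : QuotK (pKR n), σ (algebraMap _ F a) = τ (algebraMap _ F a) := by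
      intro a
      obtain ⟨q, rfl⟩ := Ideal.Quotient.mk_surjective a
      exact hqr q
    apply AlgEquiv.ext
    intro x
    obtain ⟨a, b, hb, hx'⟩ := IsFractionRing.div_surjective (A := QuotK (pKR n)) x
    rw [← hx', map_div₀, map_div₀, hQ, hQ]
  have hextf : ∀ σ τ : F ≃ₐ[ℂ] F, σ (((z^2+1)*(Yv-1) - 2*z^2*(Xv-1))/((z^2+1)*(Yv-1) - 2*(Xv-1))) = τ (((z^2+1)*(Yv-1) - 2*z^2*(Xv-1))/((z^2+1)*(Yv-1) - 2*(Xv-1))) → σ = τ := by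
    intro σ τ h
    apply hextXY
    · have e1 := congrArg σ hXrat
      have e2 := congrArg τ hXrat
      simp only [map_mul, map_add, map_sub, map_pow, map_one, hcζ] at e1 e2
      rw [h] at e1
      have hne : (z^2 - τ (((z^2+1)*(Yv-1) - 2*z^2*(Xv-1))/((z^2+1)*(Yv-1) - 2*(Xv-1)))) * (1 - τ (((z^2+1)*(Yv-1) - 2*z^2*(Xv-1))/((z^2+1)*(Yv-1) - 2*(Xv-1)))) ≠ 0 := by
        have h3 := hmapne τ _ (mul_ne_zero hωf hf1)
        simpa only [map_mul, map_sub, map_pow, map_one, hcζ] using h3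
      exact mul_right_cancel₀ hne (e1.trans e2.symm)
    · have e1 := congrArg σ hYrat
      have e2 := congrArg τ hYrat
      simp only [map_mul, map_add, map_sub, map_pow, map_one, hcζ] at e1 e2
      rw [h] at e1
      have hne : (1 - τ (((z^2+1)*(Yv-1) - 2*z^2*(Xv-1))/((z^2+1)*(Yv-1) - 2*(Xv-1)))) * (1 - τ (((z^2+1)*(Yv-1) - 2*z^2*(Xv-1))/((z^2+1)*(Yv-1) - 2*(Xv-1)))) ≠ 0 := by
        have h3 := hmapne τ _ (mul_ne_zero hf1 hf1)
        simpa only [map_mul, map_sub, map_pow, map_one, hcζ] using h3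
      exact mul_right_cancel₀ hne (e1.trans e2.symm)
  -- the rotation δ
  set δg : F ≃ₐ[ℂ] F := η * ξ with hδg
  have hδfe : δg (((z^2+1)*(Yv-1) - 2*z^2*(Xv-1))/((z^2+1)*(Yv-1) - 2*(Xv-1))) = z^2 * (((z^2+1)*(Yv-1) - 2*z^2*(Xv-1))/((z^2+1)*(Yv-1) - 2*(Xv-1))) := by
    rw [hδg, AlgEquiv.mul_apply, hξfe, map_div₀, map_pow, hcζ, hηfe,
      div_div_eq_mul_div, div_one]
  have hpow : ∀ k : ℕ, (δg^k) (((z^2+1)*(Yv-1) - 2*z^2*(Xv-1))/((z^2+1)*(Yv-1) - 2*(Xv-1))) = (z^2)^k * (((z^2+1)*(Yv-1) - 2*z^2*(Xv-1))/((z^2+1)*(Yv-1) - 2*(Xv-1))) := by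
    intro k
    induction k with
    | zero => rw [pow_zero, pow_zero, one_mul, AlgEquiv.one_apply]
    | succ m ih =>
      rw [pow_succ, AlgEquiv.mul_apply, hδfe, map_mul, map_pow, hcζ, ih]
      ring
  have hz2n : (z^2)^n = 1 := by
    have hC : (ζ^2)^n = 1 := hprim.pow_eq_one
    rw [hz, ← map_pow, ← map_pow, hC, map_one]
  have hδn : δg^n = 1 := by
    apply hextf
    rw [hpow n, hz2n, one_mul, AlgEquiv.one_apply]
  have hdvd : ∀ m : ℕ, (z^2)^m = 1 → n ∣ m := by
    intro m hm
    apply hprim.dvd_of_pow_eq_one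
    apply (algebraMap ℂ F).injective
    rw [map_pow, map_pow, map_one]
    rw [hz] at hm
    exact hm
  have hord : orderOf δg = n := by
    apply Nat.dvd_antisymm (orderOf_dvd_of_pow_eq_one hδn)
    apply hdvd
    have h1 := hpow (orderOf δg)
    rw [pow_orderOf_eq_one, AlgEquiv.one_apply] at h1
    have h2 : ((z^2)^(orderOf δg) - 1) * (((z^2+1)*(Yv-1) - 2*z^2*(Xv-1))/((z^2+1)*(Yv-1) - 2*(Xv-1))) = 0 := by linear_combination -h1
    rcases mul_eq_zero.mp h2 with h3 | h3
    · exact sub_eq_zero.mp h3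
    · exact absurd h3 hfe0
  have hξsq : ξ * ξ = 1 := by
    apply hextf
    rw [AlgEquiv.mul_apply, hξfe, map_div₀, map_pow, hcζ, hξfe, AlgEquiv.one_apply,
      div_div_eq_mul_div, mul_comm, mul_div_assoc, div_self hz20, mul_one]
  have hrel : ξ * δg * ξ = δg⁻¹ := by
    apply hextf
    have hinvfe : δg⁻¹ (((z^2+1)*(Yv-1) - 2*z^2*(Xv-1))/((z^2+1)*(Yv-1) - 2*(Xv-1))) = (((z^2+1)*(Yv-1) - 2*z^2*(Xv-1))/((z^2+1)*(Yv-1) - 2*(Xv-1))) / z^2 := by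
      have hup : δg ((((z^2+1)*(Yv-1) - 2*z^2*(Xv-1))/((z^2+1)*(Yv-1) - 2*(Xv-1))) / z^2) = (((z^2+1)*(Yv-1) - 2*z^2*(Xv-1))/((z^2+1)*(Yv-1) - 2*(Xv-1))) := by
        rw [map_div₀, hδfe, map_pow, hcζ]
        field_simp
      calc δg⁻¹ (((z^2+1)*(Yv-1) - 2*z^2*(Xv-1))/((z^2+1)*(Yv-1) - 2*(Xv-1))) = δg⁻¹ (δg ((((z^2+1)*(Yv-1) - 2*z^2*(Xv-1))/((z^2+1)*(Yv-1) - 2*(Xv-1))) / z^2)) := by rw [hup]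
        _ = (((z^2+1)*(Yv-1) - 2*z^2*(Xv-1))/((z^2+1)*(Yv-1) - 2*(Xv-1))) / z^2 := by
            rw [← AlgEquiv.mul_apply, inv_mul_cancel, AlgEquiv.one_apply]
    rw [AlgEquiv.mul_apply, AlgEquiv.mul_apply, hξfe]
    have h1 : δg (z^2/(((z^2+1)*(Yv-1) - 2*z^2*(Xv-1))/((z^2+1)*(Yv-1) - 2*(Xv-1)))) = z^2/(z^2*(((z^2+1)*(Yv-1) - 2*z^2*(Xv-1))/((z^2+1)*(Yv-1) - 2*(Xv-1)))) := by
      rw [map_div₀, map_pow, hcζ, hδfe]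
    have h2 : ξ (z^2/(z^2*(((z^2+1)*(Yv-1) - 2*z^2*(Xv-1))/((z^2+1)*(Yv-1) - 2*(Xv-1))))) = z^2/(z^2*(z^2/(((z^2+1)*(Yv-1) - 2*z^2*(Xv-1))/((z^2+1)*(Yv-1) - 2*(Xv-1))))) := by
      rw [map_div₀, map_mul, map_pow, hcζ, hξfe]
    rw [h1, h2, hinvfe]
    field_simp
  have hξD : ξ ∉ Subgroup.zpowers δg := by
    intro hmem
    obtain ⟨k, hk⟩ := hmem
    have hcom : δg * ξ = ξ * δg := by
      rw [← hk]
      exact ((Commute.refl δg).zpow_right k).eq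
    have h1 : δg⁻¹ = δg := by
      calc δg⁻¹ = ξ * δg * ξ := hrel.symm
        _ = ξ * (ξ * δg) := by rw [mul_assoc, hcom]
        _ = δg := by rw [← mul_assoc, hξsq, one_mul]
    have h2 : δg^2 = 1 := by
      rw [pow_two]
      nth_rewrite 1 [← h1]
      exact inv_mul_cancel δg
    have h3 : orderOf δg ∣ 2 := orderOf_dvd_of_pow_eq_one h2
    rw [hord] at h3
    have := Nat.le_of_dvd two_pos h3
    omega
  have hηeq : η = δg * ξ := by
    rw [hδg, mul_assoc, hξsq, mul_one]
  obtain ⟨hfin, hcard⟩ := dihedral_count ξ δg η n (by omega) hξsq hrel hord hξD hηeq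
  exact ⟨part1, part2, part3, hfin, hcard⟩
end

section
/- Fix C > 0 and real numbers x₁ < 1 < x₄. Then, as (x₂, x₃) tends to (1,1) subject to x₁ < x₂ < x₃ < x₄, the elliptic integral ∫_{x₂}^{x₃} dx / √(C(x−x₁)(x−x₂)(x₃−x)(x₄−x)) converges to π / √(C(x₄−1)(1−x₁)). -/
open Real Filter MeasureTheory intervalIntegral Set

lemma phi_integrable_half {a b : ℝ} (hab : a < b) :
    IntervalIntegrable (fun x => 1 / Real.sqrt ((x - a) * (b - x))) volume a ((a + b) / 2) := by
  set c := (a + b) / 2 with hc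
  have hac : a < c := by rw [hc]; linarith
  have hdomint : IntervalIntegrable
      (fun x => (Real.sqrt ((b - a) / 2))⁻¹ * ((x - a) ^ (-(1/2) : ℝ))) volume a c := by
    have h1 : IntervalIntegrable (fun x : ℝ => x ^ (-(1/2) : ℝ)) volume (a - a) (c - a) :=
      intervalIntegrable_rpow' (by norm_num)
    have h2 := (h1.comp_sub_right a).const_mul (Real.sqrt ((b - a) / 2))⁻¹
    simpa using h2
  refine hdomint.mono_fun ?_ ?_
  · apply Measurable.aestronglyMeasurable; fun_prop
  · rw [Filter.EventuallyLE, ae_restrict_iff' measurableSet_uIoc]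
    refine Filter.Eventually.of_forall fun x hx => ?_
    rw [Set.uIoc_of_le hac.le] at hx
    have hxa : 0 < x - a := by linarith [hx.1]
    have hbx : (b - a) / 2 ≤ b - x := by have := hx.2; rw [hc] at this; linarith
    have hba : (0:ℝ) < (b - a) / 2 := by linarith
    have key : 1 / Real.sqrt ((x - a) * (b - x)) ≤
        (Real.sqrt ((b - a) / 2))⁻¹ * ((x - a) ^ (-(1/2) : ℝ)) := by
      rw [Real.rpow_neg hxa.le, ← Real.sqrt_eq_rpow, ← mul_inv,
        ← Real.sqrt_mul hba.le, one_div]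
      have h5 : Real.sqrt (((b - a) / 2) * (x - a)) ≤ Real.sqrt ((x - a) * (b - x)) := by
        apply Real.sqrt_le_sqrt; nlinarith
      have h6 : 0 < Real.sqrt (((b - a) / 2) * (x - a)) := Real.sqrt_pos.mpr (by positivity)
      exact inv_anti₀ h6 h5
    have habs1 : |1 / Real.sqrt ((x - a) * (b - x))| = 1 / Real.sqrt ((x - a) * (b - x)) :=
      abs_of_nonneg (by positivity)
    have habs2 : |(Real.sqrt ((b - a) / 2))⁻¹ * ((x - a) ^ (-(1/2) : ℝ))| =
        (Real.sqrt ((b - a) / 2))⁻¹ * ((x - a) ^ (-(1/2) : ℝ)) :=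
      abs_of_nonneg (by positivity)
    rw [Real.norm_eq_abs, Real.norm_eq_abs, habs1, habs2]
    exact key

lemma phi_integrable {a b : ℝ} (hab : a < b) :
    IntervalIntegrable (fun x => 1 / Real.sqrt ((x - a) * (b - x))) volume a b := by
  have h1 := phi_integrable_half hab
  -- second half by symmetry x ↦ a + b - x
  have h2 := h1.comp_sub_left (a + b)
  have he : (fun x => 1 / Real.sqrt (((a + b - x) - a) * (b - (a + b - x)))) =
      (fun x => 1 / Real.sqrt ((x - a) * (b - x))) := by
    funext x; congr 2; ring
  rw [he] at h2
  have hend : a + b - (a + b) / 2 = (a + b) / 2 := by ring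
  rw [hend, show a + b - a = b by ring] at h2
  exact h1.trans h2.symm

lemma phi_integral {a b : ℝ} (hab : a < b) :
    ∫ x in a..b, 1 / Real.sqrt ((x - a) * (b - x)) = π := by
  have hba : (0:ℝ) < b - a := by linarith
  set f : ℝ → ℝ := fun x => Real.arcsin ((2 * x - (a + b)) / (b - a)) with hf
  have hderiv : ∀ x ∈ Set.Ioo a b,
      HasDerivAt f (1 / Real.sqrt ((x - a) * (b - x))) x := by
    intro x hx
    set u : ℝ := (2 * x - (a + b)) / (b - a) with hu
    have hu1 : -1 < u := by
      rw [hu, lt_div_iff₀ hba]; nlinarith [hx.1]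
    have hu2 : u < 1 := by
      rw [hu, div_lt_iff₀ hba]; nlinarith [hx.2]
    have hinner : HasDerivAt (fun x : ℝ => (2 * x - (a + b)) / (b - a)) (2 / (b - a)) x := by
      have : HasDerivAt (fun x : ℝ => 2 * x - (a + b)) 2 x := by
        simpa using ((hasDerivAt_id x).const_mul 2).sub_const (a + b)
      simpa using this.div_const (b - a)
    have harc := (Real.hasDerivAt_arcsin (ne_of_gt hu1) (ne_of_lt hu2)).comp x hinner
    have hsq : 0 < 1 - u ^ 2 := by nlinarith
    have hkey : (1 / Real.sqrt (1 - u ^ 2)) * (2 / (b - a)) =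
        1 / Real.sqrt ((x - a) * (b - x)) := by
      have e1 : (b - a) * Real.sqrt (1 - u ^ 2) = 2 * Real.sqrt ((x - a) * (b - x)) := by
        have e2 : (b - a) * Real.sqrt (1 - u ^ 2) = Real.sqrt ((b - a) ^ 2 * (1 - u ^ 2)) := by
          rw [Real.sqrt_mul (by positivity), Real.sqrt_sq hba.le]
        have e3 : (b - a) ^ 2 * (1 - u ^ 2) = 4 * ((x - a) * (b - x)) := by
          rw [hu]; field_simp; ring
        rw [e2, e3, Real.sqrt_mul (by norm_num), show Real.sqrt 4 = 2 by
          rw [show (4:ℝ) = 2 ^ 2 by norm_num, Real.sqrt_sq (by norm_num)]]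
      have hs1 : 0 < Real.sqrt (1 - u ^ 2) := Real.sqrt_pos.mpr hsq
      have hs2 : 0 < Real.sqrt ((x - a) * (b - x)) := by
        apply Real.sqrt_pos.mpr; nlinarith [hx.1, hx.2]
      field_simp
      linarith [e1]
    rw [← hkey]
    exact harc
  have hint := phi_integrable hab
  have ha : Tendsto f (nhdsWithin a (Set.Ioi a)) (nhds (-(π / 2))) := by
    have hc : ContinuousAt f a := by
      apply Real.continuous_arcsin.continuousAt.comp; fun_prop
    have hval : f a = -(π / 2) := by
      rw [hf]
      have : (2 * a - (a + b)) / (b - a) = -1 := by field_simp; ring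
      simp [this, Real.arcsin_neg_one]
    rw [← hval]
    exact hc.continuousWithinAt.tendsto
  have hb : Tendsto f (nhdsWithin b (Set.Iio b)) (nhds (π / 2)) := by
    have hc : ContinuousAt f b := by
      apply Real.continuous_arcsin.continuousAt.comp; fun_prop
    have hval : f b = π / 2 := by
      rw [hf]
      have : (2 * b - (a + b)) / (b - a) = 1 := by field_simp; ring
      simp [this, Real.arcsin_one]
    rw [← hval]
    exact hc.continuousWithinAt.tendsto
  have := intervalIntegral.integral_eq_sub_of_hasDerivAt_of_tendsto hab hderiv hint ha hb
  rw [this]; ring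


lemma triple_mul_le {C u v u' v' : ℝ} (hC : 0 < C) (hu : 0 < u) (hv : 0 < v)
    (hu' : u ≤ u') (hv' : v ≤ v') : C * u * v ≤ C * u' * v' := by
  calc C * u * v = C * (u * v) := by ring
    _ ≤ C * (u' * v') :=
        mul_le_mul_of_nonneg_left (mul_le_mul hu' hv' hv.le (le_trans hu.le hu')) hC.le
    _ = C * u' * v' := by ring

/-- as `(x₂, x₃) → (1, 1)` with `x₁ < x₂ < x₃ < x₄`, the elliptic integral
`∫_{x₂}^{x₃} dx/√(C(x-x₁)(x-x₂)(x₃-x)(x₄-x))` converges to `π/√(C(x₄-1)(1-x₁))`. -/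
theorem period_omega2_degenerates (C x₁ x₄ : ℝ) (hC : 0 < C) (hx1 : x₁ < 1) (hx4 : 1 < x₄) :
    Tendsto
      (fun q : ℝ × ℝ =>
        ∫ x in q.1..q.2, 1 / Real.sqrt (C * (x - x₁) * (x - q.1) * (q.2 - x) * (x₄ - x)))
      (nhdsWithin ((1 : ℝ), (1 : ℝ)) {q : ℝ × ℝ | x₁ < q.1 ∧ q.1 < q.2 ∧ q.2 < x₄})
      (nhds (π / Real.sqrt (C * (x₄ - 1) * (1 - x₁)))) := by
  have hden : (0:ℝ) < C * (1 - x₁) * (x₄ - 1) := mul_pos (mul_pos hC (by linarith)) (by linarith)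
  have hlo_t : Tendsto (fun q : ℝ × ℝ => π / Real.sqrt (C * (q.2 - x₁) * (x₄ - q.1)))
      (nhdsWithin ((1 : ℝ), (1 : ℝ)) {q : ℝ × ℝ | x₁ < q.1 ∧ q.1 < q.2 ∧ q.2 < x₄})
      (nhds (π / Real.sqrt (C * (x₄ - 1) * (1 - x₁)))) := by
    have hc : ContinuousAt (fun q : ℝ × ℝ => π / Real.sqrt (C * (q.2 - x₁) * (x₄ - q.1)))
        ((1 : ℝ), (1 : ℝ)) := by
      apply ContinuousAt.div continuousAt_const (by fun_prop)
      have h2 : Real.sqrt (C * (1 - x₁) * (x₄ - 1)) ≠ 0 := ne_of_gt (Real.sqrt_pos.mpr hden)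
      simpa using h2
    have ht := hc.tendsto.mono_left (nhdsWithin_le_nhds
      (s := {q : ℝ × ℝ | x₁ < q.1 ∧ q.1 < q.2 ∧ q.2 < x₄}))
    have heq : C * (((1:ℝ),(1:ℝ)).2 - x₁) * (x₄ - ((1:ℝ),(1:ℝ)).1) = C * (x₄ - 1) * (1 - x₁) := by
      simp; ring
    simp only [] at ht
    rw [heq] at ht
    exact ht
  have hhi_t : Tendsto (fun q : ℝ × ℝ => π / Real.sqrt (C * (q.1 - x₁) * (x₄ - q.2)))
      (nhdsWithin ((1 : ℝ), (1 : ℝ)) {q : ℝ × ℝ | x₁ < q.1 ∧ q.1 < q.2 ∧ q.2 < x₄})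
      (nhds (π / Real.sqrt (C * (x₄ - 1) * (1 - x₁)))) := by
    have hc : ContinuousAt (fun q : ℝ × ℝ => π / Real.sqrt (C * (q.1 - x₁) * (x₄ - q.2)))
        ((1 : ℝ), (1 : ℝ)) := by
      apply ContinuousAt.div continuousAt_const (by fun_prop)
      have h2 : Real.sqrt (C * (1 - x₁) * (x₄ - 1)) ≠ 0 := ne_of_gt (Real.sqrt_pos.mpr hden)
      simpa using h2
    have ht := hc.tendsto.mono_left (nhdsWithin_le_nhds
      (s := {q : ℝ × ℝ | x₁ < q.1 ∧ q.1 < q.2 ∧ q.2 < x₄}))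
    have heq : C * (((1:ℝ),(1:ℝ)).1 - x₁) * (x₄ - ((1:ℝ),(1:ℝ)).2) = C * (x₄ - 1) * (1 - x₁) := by
      simp; ring
    simp only [] at ht
    rw [heq] at ht
    exact ht
  refine tendsto_of_tendsto_of_tendsto_of_le_of_le' hlo_t hhi_t ?_ ?_
  · -- lo q ≤ ∫ ...
    filter_upwards [self_mem_nhdsWithin] with q hq
    obtain ⟨h1, h2, h3⟩ := hq
    set a := q.1; set b := q.2
    have hab : a < b := h2
    have hGcont : ContinuousOn (fun x => 1 / Real.sqrt (C * (x - x₁) * (x₄ - x)))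
        (Set.uIcc a b) := by
      rw [Set.uIcc_of_le hab.le]
      intro x hx
      have hx1' : x₁ < x := lt_of_lt_of_le h1 hx.1
      have hx4' : x < x₄ := lt_of_le_of_lt hx.2 h3
      apply ContinuousWithinAt.div continuousWithinAt_const
      · exact ((Real.continuous_sqrt.continuousAt.comp (by fun_prop)).continuousWithinAt)
      · have : (0:ℝ) < C * (x - x₁) * (x₄ - x) := mul_pos (mul_pos hC (by linarith)) (by linarith)
        positivity
    have hφ := phi_integrable hab
    have hGφ : IntervalIntegrable
        (fun x => (1 / Real.sqrt (C * (x - x₁) * (x₄ - x))) *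
          (1 / Real.sqrt ((x - a) * (b - x)))) volume a b :=
      hφ.continuousOn_mul hGcont
    have hEq : ∀ x ∈ Set.uIcc a b,
        1 / Real.sqrt (C * (x - x₁) * (x - a) * (b - x) * (x₄ - x)) =
        (1 / Real.sqrt (C * (x - x₁) * (x₄ - x))) * (1 / Real.sqrt ((x - a) * (b - x))) := by
      intro x hx
      rw [Set.uIcc_of_le hab.le] at hx
      have hx1' : x₁ < x := lt_of_lt_of_le h1 hx.1
      have hx4' : x < x₄ := lt_of_le_of_lt hx.2 h3
      have hA : (0:ℝ) ≤ C * (x - x₁) * (x₄ - x) := (mul_pos (mul_pos hC (by linarith)) (by linarith)).le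
      rw [show C * (x - x₁) * (x - a) * (b - x) * (x₄ - x) =
        (C * (x - x₁) * (x₄ - x)) * ((x - a) * (b - x)) by ring,
        Real.sqrt_mul hA, one_div, mul_inv, one_div, one_div]
    have hIeq : (∫ x in a..b, 1 / Real.sqrt (C * (x - x₁) * (x - a) * (b - x) * (x₄ - x))) =
        ∫ x in a..b, (1 / Real.sqrt (C * (x - x₁) * (x₄ - x))) *
          (1 / Real.sqrt ((x - a) * (b - x))) :=
      intervalIntegral.integral_congr hEq
    have hm : ∀ x ∈ Set.Icc a b,
        (1 / Real.sqrt (C * (b - x₁) * (x₄ - a))) * (1 / Real.sqrt ((x - a) * (b - x))) ≤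
        (1 / Real.sqrt (C * (x - x₁) * (x₄ - x))) * (1 / Real.sqrt ((x - a) * (b - x))) := by
      intro x hx
      have hx1' : x₁ < x := lt_of_lt_of_le h1 hx.1
      have hx4' : x < x₄ := lt_of_le_of_lt hx.2 h3
      have hpos : (0:ℝ) < C * (x - x₁) * (x₄ - x) := mul_pos (mul_pos hC (by linarith)) (by linarith)
      have hle : C * (x - x₁) * (x₄ - x) ≤ C * (b - x₁) * (x₄ - a) :=
        triple_mul_le hC (by linarith) (by linarith) (by linarith [hx.2]) (by linarith [hx.1])
      have h5 : 1 / Real.sqrt (C * (b - x₁) * (x₄ - a)) ≤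
          1 / Real.sqrt (C * (x - x₁) * (x₄ - x)) := by
        apply one_div_le_one_div_of_le (Real.sqrt_pos.mpr hpos) (Real.sqrt_le_sqrt hle)
      apply mul_le_mul_of_nonneg_right h5 (by positivity)
    have hmono := intervalIntegral.integral_mono_on hab.le
      (hφ.const_mul (1 / Real.sqrt (C * (b - x₁) * (x₄ - a)))) hGφ hm
    rw [intervalIntegral.integral_const_mul, phi_integral hab] at hmono
    calc π / Real.sqrt (C * (q.2 - x₁) * (x₄ - q.1))
        = (1 / Real.sqrt (C * (b - x₁) * (x₄ - a))) * π := (one_div_mul_eq_div _ _).symm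
      _ ≤ _ := by rw [hIeq]; exact hmono
  · -- ∫ ... ≤ hi q
    filter_upwards [self_mem_nhdsWithin] with q hq
    obtain ⟨h1, h2, h3⟩ := hq
    set a := q.1; set b := q.2
    have hab : a < b := h2
    have hGcont : ContinuousOn (fun x => 1 / Real.sqrt (C * (x - x₁) * (x₄ - x)))
        (Set.uIcc a b) := by
      rw [Set.uIcc_of_le hab.le]
      intro x hx
      have hx1' : x₁ < x := lt_of_lt_of_le h1 hx.1
      have hx4' : x < x₄ := lt_of_le_of_lt hx.2 h3
      apply ContinuousWithinAt.div continuousWithinAt_const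
      · exact ((Real.continuous_sqrt.continuousAt.comp (by fun_prop)).continuousWithinAt)
      · have : (0:ℝ) < C * (x - x₁) * (x₄ - x) := mul_pos (mul_pos hC (by linarith)) (by linarith)
        positivity
    have hφ := phi_integrable hab
    have hGφ : IntervalIntegrable
        (fun x => (1 / Real.sqrt (C * (x - x₁) * (x₄ - x))) *
          (1 / Real.sqrt ((x - a) * (b - x)))) volume a b :=
      hφ.continuousOn_mul hGcont
    have hEq : ∀ x ∈ Set.uIcc a b,
        1 / Real.sqrt (C * (x - x₁) * (x - a) * (b - x) * (x₄ - x)) =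
        (1 / Real.sqrt (C * (x - x₁) * (x₄ - x))) * (1 / Real.sqrt ((x - a) * (b - x))) := by
      intro x hx
      rw [Set.uIcc_of_le hab.le] at hx
      have hx1' : x₁ < x := lt_of_lt_of_le h1 hx.1
      have hx4' : x < x₄ := lt_of_le_of_lt hx.2 h3
      have hA : (0:ℝ) ≤ C * (x - x₁) * (x₄ - x) := (mul_pos (mul_pos hC (by linarith)) (by linarith)).le
      rw [show C * (x - x₁) * (x - a) * (b - x) * (x₄ - x) =
        (C * (x - x₁) * (x₄ - x)) * ((x - a) * (b - x)) by ring,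
        Real.sqrt_mul hA, one_div, mul_inv, one_div, one_div]
    have hIeq : (∫ x in a..b, 1 / Real.sqrt (C * (x - x₁) * (x - a) * (b - x) * (x₄ - x))) =
        ∫ x in a..b, (1 / Real.sqrt (C * (x - x₁) * (x₄ - x))) *
          (1 / Real.sqrt ((x - a) * (b - x))) :=
      intervalIntegral.integral_congr hEq
    have hm : ∀ x ∈ Set.Icc a b,
        (1 / Real.sqrt (C * (x - x₁) * (x₄ - x))) * (1 / Real.sqrt ((x - a) * (b - x))) ≤
        (1 / Real.sqrt (C * (a - x₁) * (x₄ - b))) * (1 / Real.sqrt ((x - a) * (b - x))) := by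
      intro x hx
      have hx1' : x₁ < x := lt_of_lt_of_le h1 hx.1
      have hx4' : x < x₄ := lt_of_le_of_lt hx.2 h3
      have hpos : (0:ℝ) < C * (a - x₁) * (x₄ - b) := mul_pos (mul_pos hC (by linarith)) (by linarith)
      have hle : C * (a - x₁) * (x₄ - b) ≤ C * (x - x₁) * (x₄ - x) :=
        triple_mul_le hC (by linarith) (by linarith) (by linarith [hx.1]) (by linarith [hx.2])
      have h5 : 1 / Real.sqrt (C * (x - x₁) * (x₄ - x)) ≤
          1 / Real.sqrt (C * (a - x₁) * (x₄ - b)) := by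
        apply one_div_le_one_div_of_le (Real.sqrt_pos.mpr hpos) (Real.sqrt_le_sqrt hle)
      apply mul_le_mul_of_nonneg_right h5 (by positivity)
    have hmono := intervalIntegral.integral_mono_on hab.le hGφ
      (hφ.const_mul (1 / Real.sqrt (C * (a - x₁) * (x₄ - b)))) hm
    rw [intervalIntegral.integral_const_mul, phi_integral hab] at hmono
    calc (∫ x in a..b, 1 / Real.sqrt (C * (x - x₁) * (x - a) * (b - x) * (x₄ - x)))
        ≤ (1 / Real.sqrt (C * (a - x₁) * (x₄ - b))) * π := by rw [hIeq]; exact hmono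
      _ = π / Real.sqrt (C * (q.1 - x₁) * (x₄ - q.2)) := one_div_mul_eq_div _ _
end
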